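/- arXiv:2005.05364 — 4 statements merged into one kernel-verified Lean document; each statement's English description precedes it below -/
import Mathlib

section
/- Under Assumption 1, a liquidation vector s** ∈ D is a Nash equilibrium of problem (P2) at the consistent prices (q**, q̄**) = (g(Σ_{i=1}^n s_i**), f̄_1(s**), ..., f̄_n(s**)) if and only if s** is a Nash equilibrium of problem (P1). -/
noncomputable section

/-- The domain `D = ∏ [0, aᵢ]` of admissible liquidation vectors. -/
def memD (n : ℕ) (a s : Fin n → ℝ) : Prop := ∀ i, s i ∈ Set.Icc 0 (a i)

/-- Bank `i`'s cost: realized loss from sales plus interest on the borrowed amount. -/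
def obj (n : ℕ) (r : ℝ) (h : Fin n → ℝ) (fbar : Fin n → (Fin n → ℝ) → ℝ)
    (i : Fin n) (s : Fin n → ℝ) : ℝ :=
  s i * (1 - fbar i s) + r * (h i - s i * fbar i s)

/-- Feasibility in problem (P2) with fixed prices `(q, q̄)`. -/
def feasP2 (n : ℕ) (a h : Fin n → ℝ) (q : ℝ) (qb : Fin n → ℝ) (i : Fin n) (x : ℝ) : Prop :=
  x ∈ Set.Icc 0 (a i) ∧ x ≤ h i / qb i ∧ (h i - a i * q) / (qb i - q) ≤ x

/-- `s` is a Nash equilibrium of problem (P2) at fixed prices `(q, q̄)`: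
each bank's action is feasible and optimal given the others' actions, and a bank whose
feasible set is empty (`h i > a i * q̄ i`) liquidates everything. -/
def NashP2 (n : ℕ) (a h : Fin n → ℝ) (r q : ℝ) (qb : Fin n → ℝ)
    (fbar : Fin n → (Fin n → ℝ) → ℝ) (s : Fin n → ℝ) : Prop :=
  ∀ i : Fin n,
    (h i ≤ a i * qb i →
      feasP2 n a h q qb i (s i) ∧
      ∀ x : ℝ, feasP2 n a h q qb i x →
        obj n r h fbar i s ≤ obj n r h fbar i (Function.update s i x)) ∧
    (a i * qb i < h i → s i = a i)

/-- Feasibility in problem (P1): the sale raises at most `h i`, and cash raised plus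
collateral capacity covers the shortfall. -/
def feasP1 (n : ℕ) (a h : Fin n → ℝ) (fbar : Fin n → (Fin n → ℝ) → ℝ) (g : ℝ → ℝ)
    (i : Fin n) (s : Fin n → ℝ) (x : ℝ) : Prop :=
  x ∈ Set.Icc 0 (a i) ∧
  x * fbar i (Function.update s i x) ≤ h i ∧
  h i ≤ x * fbar i (Function.update s i x)
        + (a i - x) * g (∑ j, Function.update s i x j)

/-- `s` is a Nash equilibrium of problem (P1): each bank's action is feasible and optimal
given the others' actions, and a bank with empty feasible set liquidates everything. -/
def NashP1 (n : ℕ) (a h : Fin n → ℝ) (r : ℝ) (fbar : Fin n → (Fin n → ℝ) → ℝ)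
    (g : ℝ → ℝ) (s : Fin n → ℝ) : Prop :=
  ∀ i : Fin n,
    ((∃ x, feasP1 n a h fbar g i s x) →
      feasP1 n a h fbar g i s (s i) ∧
      ∀ x, feasP1 n a h fbar g i s x →
        obj n r h fbar i s ≤ obj n r h fbar i (Function.update s i x)) ∧
    ((¬ ∃ x, feasP1 n a h fbar g i s x) → s i = a i)

/-- Assumption 1 on the inverse demand functions `f̄ᵢ` and the haircut function `g`. -/
structure Assumption1 (n : ℕ) (a : Fin n → ℝ) (M : ℝ)
    (fbar : Fin n → (Fin n → ℝ) → ℝ) (g : ℝ → ℝ) : Prop where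
  fbar_mem : ∀ i s, memD n a s → fbar i s ∈ Set.Ioc (0 : ℝ) 1
  fbar_cont : ∀ i, ContinuousOn (fbar i) {s | memD n a s}
  fbar_anti : ∀ i s t, memD n a s → memD n a t → (∀ j, s j ≤ t j) → fbar i t ≤ fbar i s
  fbar_one : ∀ i, fbar i (fun _ => 0) = 1
  cash_mono : ∀ i s, memD n a s →
    StrictMonoOn (fun x => x * fbar i (Function.update s i x)) (Set.Icc 0 (a i))
  cash_concave : ∀ i s, memD n a s →
    ConcaveOn ℝ (Set.Icc 0 (a i)) (fun x => x * fbar i (Function.update s i x))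
  g_mem : ∀ x ∈ Set.Icc (0 : ℝ) M, g x ∈ Set.Ioc (0 : ℝ) 1
  g_cont : ContinuousOn g (Set.Icc 0 M)
  g_convex : ConvexOn ℝ (Set.Icc 0 M) g
  g_anti : StrictAntiOn g (Set.Icc 0 M)
  g_lt_fbar : ∀ i s, memD n a s → g (∑ j, s j) < fbar i s
  total_mono : ∀ i s, memD n a s →
    StrictMonoOn
      (fun x => x * fbar i (Function.update s i x)
        + (a i - x) * g (∑ j, Function.update s i x j)) (Set.Icc 0 (a i))


section AuxNash

variable {n : ℕ} {a h : Fin n → ℝ} {r M : ℝ}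
  {fbar : Fin n → (Fin n → ℝ) → ℝ} {g : ℝ → ℝ}

lemma memD_update {s : Fin n → ℝ} (hs : memD n a s) {i : Fin n} {x : ℝ}
    (hx : x ∈ Set.Icc 0 (a i)) : memD n a (Function.update s i x) := by
  intro j
  rcases eq_or_ne j i with rfl | hj
  · simpa using hx
  · simpa [Function.update_of_ne hj] using hs j

lemma sum_memD_mem (hM : ∑ i, a i ≤ M) {t : Fin n → ℝ} (ht : memD n a t) :
    (∑ j, t j) ∈ Set.Icc (0:ℝ) M :=
  ⟨Finset.sum_nonneg fun j _ => (ht j).1,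
   le_trans (Finset.sum_le_sum fun j _ => (ht j).2) hM⟩

lemma obj_update_eq (n : ℕ) (r : ℝ) (h : Fin n → ℝ) (fbar : Fin n → (Fin n → ℝ) → ℝ)
    (i : Fin n) (s : Fin n → ℝ) (x : ℝ) :
    obj n r h fbar i (Function.update s i x)
      = x + r * h i - (1 + r) * (x * fbar i (Function.update s i x)) := by
  simp only [obj, Function.update_self]
  ring

lemma obj_convex (hA : Assumption1 n a M fbar g) (hr : 0 ≤ r)
    {s : Fin n → ℝ} (hs : memD n a s) (i : Fin n) (h : Fin n → ℝ) :
    ConvexOn ℝ (Set.Icc 0 (a i))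
      (fun x => obj n r h fbar i (Function.update s i x)) := by
  have hC := (hA.cash_concave i s hs).smul (c := 1 + r) (by linarith)
  have h1 : ConvexOn ℝ (Set.Icc 0 (a i)) (fun x : ℝ => x + r * h i) :=
    (convexOn_id (convex_Icc _ _)).add (convexOn_const _ (convex_Icc _ _))
  have h3 := h1.sub hC
  have heq : (fun x => obj n r h fbar i (Function.update s i x))
      = (fun x : ℝ => x + r * h i)
        - fun x => (1 + r) • (x * fbar i (Function.update s i x)) := by
    funext x
    rw [obj_update_eq, Pi.sub_apply, smul_eq_mul]
  rw [heq]
  exact h3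

end AuxNash

/-- under Assumption 1, `s** ∈ D` is a Nash equilibrium of (P2) at the
consistent prices `(g(∑ sᵢ**), f̄₁(s**), ..., f̄ₙ(s**))` iff it is a Nash equilibrium
of (P1). -/
theorem nash_equilibria_P1_P2_equivalent
    (n : ℕ) (a h : Fin n → ℝ) (r M : ℝ)
    (fbar : Fin n → (Fin n → ℝ) → ℝ) (g : ℝ → ℝ)
    (ha : ∀ i, 0 < a i) (hh : ∀ i, 0 < h i) (hr : 0 ≤ r)
    (hM : ∑ i, a i ≤ M)
    (hA : Assumption1 n a M fbar g)
    (s : Fin n → ℝ) (hs : memD n a s) :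
    NashP2 n a h r (g (∑ i, s i)) (fun i => fbar i s) fbar s ↔
      NashP1 n a h r fbar g s := by
  have hDsum := sum_memD_mem hM hs
  have hq0 : 0 < g (∑ i, s i) := (hA.g_mem _ hDsum).1
  constructor
  · -- (P2 ⇒ P1)
    intro hNE i
    obtain ⟨hfeas_opt, hins⟩ := hNE i
    have hqb0 : 0 < fbar i s := (hA.fbar_mem i s hs).1
    have hqlt : g (∑ j, s j) < fbar i s := hA.g_lt_fbar i s hs
    have hba : (0:ℝ) < fbar i s - g (∑ j, s j) := by linarith
    by_cases hcase : h i ≤ a i * fbar i s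
    · obtain ⟨hf2, hopt2⟩ := hfeas_opt hcase
      obtain ⟨hsI, hsu, hsl⟩ := hf2
      have hsu' : s i * fbar i s ≤ h i := (le_div_iff₀ hqb0).mp hsu
      have hsl' : h i ≤ s i * fbar i s + (a i - s i) * g (∑ j, s j) := by
        have hd := (div_le_iff₀ hba).mp hsl
        nlinarith
      have hf1 : feasP1 n a h fbar g i s (s i) := by
        refine ⟨hsI, ?_, ?_⟩ <;> rw [Function.update_eq_self]
        · exact hsu'
        · exact hsl'
      refine ⟨fun _ => ⟨hf1, ?_⟩, fun hne => absurd ⟨s i, hf1⟩ hne⟩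
      intro x hx
      obtain ⟨hxI, hxu, hxl⟩ := hx
      have hconv := obj_convex hA hr hs i h
      rcases lt_trichotomy x (s i) with hlt | heq | hgt
      · by_cases hxl2 : (h i - a i * g (∑ i, s i)) / (fbar i s - g (∑ i, s i)) ≤ x
        · exact hopt2 x ⟨hxI, le_trans hlt.le hsu, hxl2⟩
        · push_neg at hxl2
          set z := (h i - a i * g (∑ i, s i)) / (fbar i s - g (∑ i, s i)) with hzdef
          have hzs : z ≤ s i := hsl
          have hzlt : z < s i := by
            rcases lt_or_eq_of_le hzs with h' | h'
            · exact h'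
            · exfalso
              have hz' : z * (fbar i s - g (∑ i, s i)) = h i - a i * g (∑ i, s i) :=
                div_mul_cancel₀ _ hba.ne'
              rw [h'] at hz'
              have hmono := hA.total_mono i s hs hxI (hs i) hlt
              simp only [Function.update_eq_self] at hmono
              nlinarith
          have hz2 : feasP2 n a h (g (∑ i, s i)) (fun i => fbar i s) i z :=
            ⟨⟨le_trans hxI.1 hxl2.le, le_trans hzs hsI.2⟩, le_trans hzs hsu, le_refl z⟩
          have hφz := hopt2 z hz2
          have hz_seg : z ∈ openSegment ℝ x (s i) := by
            rw [openSegment_eq_Ioo hlt]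
            exact ⟨hxl2, hzlt⟩
          have hstep : (fun y => obj n r h fbar i (Function.update s i y)) (s i)
              ≤ (fun y => obj n r h fbar i (Function.update s i y)) z := by
            simpa [Function.update_eq_self] using hφz
          have hfin := hconv.le_left_of_right_le hxI (hs i) hz_seg hstep
          exact le_trans hφz hfin
      · rw [heq, Function.update_eq_self]
      · by_cases hxu2 : x ≤ h i / fbar i s
        · exact hopt2 x ⟨hxI, hxu2, le_trans hsl hgt.le⟩
        · push_neg at hxu2
          set z := h i / fbar i s with hzdef
          have hsz : s i ≤ z := hsu
          have hslt : s i < z := by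
            rcases lt_or_eq_of_le hsz with h' | h'
            · exact h'
            · exfalso
              have hCs : s i * fbar i s = h i := by
                rw [h', hzdef]
                exact div_mul_cancel₀ _ hqb0.ne'
              have hmono := hA.cash_mono i s hs (hs i) hxI hgt
              simp only [Function.update_eq_self] at hmono
              linarith
          have hz2 : feasP2 n a h (g (∑ i, s i)) (fun i => fbar i s) i z :=
            ⟨⟨le_of_lt (div_pos (hh i) hqb0), (div_le_iff₀ hqb0).mpr (by linarith)⟩,
              le_refl z, le_trans hsl hsz⟩
          have hφz := hopt2 z hz2
          have hz_seg : z ∈ openSegment ℝ (s i) x := by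
            rw [openSegment_eq_Ioo hgt]
            exact ⟨hslt, hxu2⟩
          have hstep : (fun y => obj n r h fbar i (Function.update s i y)) (s i)
              ≤ (fun y => obj n r h fbar i (Function.update s i y)) z := by
            simpa [Function.update_eq_self] using hφz
          have hfin := hconv.le_right_of_left_le (hs i) hxI hz_seg hstep
          exact le_trans hφz hfin
    · push_neg at hcase
      have hsa : s i = a i := hins hcase
      have hnex : ¬ ∃ x, feasP1 n a h fbar g i s x := by
        rintro ⟨x, hxI, hxu, hxl⟩
        have haI : a i ∈ Set.Icc 0 (a i) := ⟨(ha i).le, le_refl _⟩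
        have hmono := (hA.total_mono i s hs).monotoneOn hxI haI hxI.2
        have hupd : Function.update s i (a i) = s := by
          rw [← hsa]; exact Function.update_eq_self i s
        simp only [hupd, sub_self, zero_mul, add_zero] at hmono
        linarith
      exact ⟨fun hex => absurd hex hnex, fun _ => hsa⟩
  · -- (P1 ⇒ P2)
    intro hNE i
    obtain ⟨h1, h2⟩ := hNE i
    have hqb0 : 0 < fbar i s := (hA.fbar_mem i s hs).1
    have hqlt : g (∑ j, s j) < fbar i s := hA.g_lt_fbar i s hs
    have hba : (0:ℝ) < fbar i s - g (∑ j, s j) := by linarith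
    by_cases hex : ∃ x, feasP1 n a h fbar g i s x
    · obtain ⟨hf1, hopt1⟩ := h1 hex
      obtain ⟨hsI, hsu, hsl⟩ := hf1
      rw [Function.update_eq_self] at hsu hsl
      have hqq : (a i - s i) * g (∑ j, s j) ≤ (a i - s i) * fbar i s :=
        mul_le_mul_of_nonneg_left hqlt.le (by linarith [hsI.2])
      have hle : h i ≤ a i * fbar i s := by nlinarith
      constructor
      · intro _
        refine ⟨⟨hsI, (le_div_iff₀ hqb0).mpr hsu, (div_le_iff₀ hba).mpr (by nlinarith)⟩, ?_⟩
        intro x hx2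
        obtain ⟨hxI, hxu, hxl⟩ := hx2
        have hxu' : x * fbar i s ≤ h i := (le_div_iff₀ hqb0).mp hxu
        have hxl' : h i ≤ x * fbar i s + (a i - x) * g (∑ j, s j) := by
          have hd := (div_le_iff₀ hba).mp hxl
          nlinarith
        have hx1 : feasP1 n a h fbar g i s x := by
          refine ⟨hxI, ?_, ?_⟩
          · rcases le_total x (s i) with hxs | hxs
            · have hm := (hA.cash_mono i s hs).monotoneOn hxI (hs i) hxs
              simp only [Function.update_eq_self] at hm
              linarith
            · have hup : ∀ j, s j ≤ Function.update s i x j := by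
                intro j
                rcases eq_or_ne j i with rfl | hj
                · simpa using hxs
                · simp [Function.update_of_ne hj]
              have hfle := hA.fbar_anti i s _ hs (memD_update hs hxI) hup
              have hml : x * fbar i (Function.update s i x) ≤ x * fbar i s :=
                mul_le_mul_of_nonneg_left hfle hxI.1
              linarith
          · rcases le_total (s i) x with hxs | hxs
            · have hm := (hA.total_mono i s hs).monotoneOn (hs i) hxI hxs
              simp only [Function.update_eq_self] at hm
              linarith
            · have hup : ∀ j, Function.update s i x j ≤ s j := by
                intro j
                rcases eq_or_ne j i with rfl | hj
                · simpa using hxs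
                · simp [Function.update_of_ne hj]
              have hfge := hA.fbar_anti i _ s (memD_update hs hxI) hs hup
              have h1' : x * fbar i s ≤ x * fbar i (Function.update s i x) :=
                mul_le_mul_of_nonneg_left hfge hxI.1
              have hsum_le : (∑ j, Function.update s i x j) ≤ ∑ j, s j :=
                Finset.sum_le_sum fun j _ => hup j
              have hg_ge : g (∑ j, s j) ≤ g (∑ j, Function.update s i x j) := by
                rcases lt_or_eq_of_le hsum_le with h' | h'
                · exact (hA.g_anti (sum_memD_mem hM (memD_update hs hxI))
                    (sum_memD_mem hM hs) h').le
                · rw [h']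
              have h2' : (a i - x) * g (∑ j, s j)
                  ≤ (a i - x) * g (∑ j, Function.update s i x j) :=
                mul_le_mul_of_nonneg_left hg_ge (by linarith [hxI.2])
              linarith
        exact hopt1 x hx1
      · intro hlt
        exact absurd hlt (not_lt.mpr hle)
    · have hsa : s i = a i := h2 hex
      have hlt : a i * fbar i s < h i := by
        by_contra hc
        push_neg at hc
        apply hex
        have hcont : ContinuousOn (fun x => x * fbar i (Function.update s i x))
            (Set.Icc 0 (a i)) := by
          apply ContinuousOn.mul continuousOn_id
          exact (hA.fbar_cont i).comp
            (Continuous.continuousOn (continuous_const.update i continuous_id))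
            (fun x hx => memD_update hs hx)
        have hupd : Function.update s i (a i) = s := by
          rw [← hsa]; exact Function.update_eq_self i s
        have hiv := intermediate_value_Icc (le_of_lt (ha i)) hcont
        have hmem : h i ∈ Set.Icc ((fun x => x * fbar i (Function.update s i x)) 0)
            ((fun x => x * fbar i (Function.update s i x)) (a i)) := by
          simp only [hupd, zero_mul]
          exact ⟨(hh i).le, hc⟩
        obtain ⟨x, hxI, hCx⟩ := hiv hmem
        have hg0 : 0 < g (∑ j, Function.update s i x j) :=
          (hA.g_mem _ (sum_memD_mem hM (memD_update hs hxI))).1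
        refine ⟨x, hxI, le_of_eq hCx, ?_⟩
        have hnn : 0 ≤ (a i - x) * g (∑ j, Function.update s i x j) :=
          mul_nonneg (by linarith [hxI.2]) hg0.le
        simp only [] at hCx
        linarith
      exact ⟨fun hle => absurd hlt (not_lt.mpr hle), fun _ => hsa⟩
end
end

section
/- Under the VWAP pricing structure and Assumption 2, for every fixed price vector (q, q̄_1, ..., q̄_n) ∈ Q̂ := {(q,q̄) ∈ (0,1] × (0,1]^n : q < q̄_i for all i}, there exists a unique Nash equilibrium liquidation vector s̄(q, q̄_1,...,q̄_n) ∈ D of problem (P2), i.e., a unique s̄ ∈ D such that s̄_i is an optimal solution of bank i's problem (P2) given s̄_{-i} for every i. -/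
noncomputable section

/-- Volume weighted average price: every bank obtains the average order book price of the
total liquidation. -/
def vwap (n : ℕ) (f : ℝ → ℝ) : Fin n → (Fin n → ℝ) → ℝ := fun _ s =>
  if (∑ j, s j) = 0 then 1 else (∫ σ in (0:ℝ)..(∑ j, s j), f σ) / (∑ j, s j)

/-- Assumption 2 on the order book density `f : [0,M] → (0,1]`. -/
structure Assumption2 (M : ℝ) (f : ℝ → ℝ) : Prop where
  mem : ∀ x ∈ Set.Icc (0 : ℝ) M, f x ∈ Set.Ioc (0 : ℝ) 1
  anti : StrictAntiOn f (Set.Icc 0 M)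
  smooth : ContDiffOn ℝ 2 f (Set.Icc 0 M)
  f_zero : f 0 = 1
  deriv_mono : MonotoneOn (derivWithin f (Set.Icc 0 M)) (Set.Icc 0 M)

namespace FireSale

open Set intervalIntegral

def fc (M : ℝ) (f : ℝ → ℝ) : ℝ → ℝ := fun σ => f (max 0 (min σ M))

def FF (M : ℝ) (f : ℝ → ℝ) : ℝ → ℝ := fun t => ∫ σ in (0:ℝ)..t, fc M f σ

def PP (M : ℝ) (f : ℝ → ℝ) (t : ℝ) : ℝ := FF M f t / t

def AA (M : ℝ) (f : ℝ → ℝ) (t : ℝ) : ℝ := PP M f t - f t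

def df (M : ℝ) (f : ℝ → ℝ) : ℝ → ℝ := derivWithin f (Set.Icc 0 M)

variable {M : ℝ} {f : ℝ → ℝ}

lemma fc_cont (hf : Assumption2 M f) (hM0 : 0 ≤ M) : Continuous (fc M f) := by
  apply hf.smooth.continuousOn.comp_continuous
  · exact continuous_const.max (continuous_id.min continuous_const)
  · intro x
    exact ⟨le_max_left _ _, max_le hM0 (min_le_right _ _)⟩

lemma fc_eq (hx : x ∈ Icc (0:ℝ) M) : fc M f x = f x := by
  unfold fc
  rw [min_eq_left hx.2, max_eq_right hx.1]

lemma FF_hasDerivAt (hf : Assumption2 M f) (hM0 : 0 ≤ M) (t : ℝ) :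
    HasDerivAt (FF M f) (fc M f t) t :=
  intervalIntegral.integral_hasDerivAt_right
    ((fc_cont hf hM0).intervalIntegrable _ _)
    ((fc_cont hf hM0).stronglyMeasurableAtFilter _ _)
    (fc_cont hf hM0).continuousAt

lemma FF_cont (hf : Assumption2 M f) (hM0 : 0 ≤ M) : Continuous (FF M f) :=
  continuous_iff_continuousAt.2 fun t => (FF_hasDerivAt hf hM0 t).continuousAt

lemma FF_zero : FF M f 0 = 0 := intervalIntegral.integral_same

lemma FF_eq (hf : Assumption2 M f) (hM0 : 0 ≤ M) {t : ℝ} (h0 : 0 ≤ t) (htM : t ≤ M) :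
    FF M f t = ∫ σ in (0:ℝ)..t, f σ := by
  apply intervalIntegral.integral_congr
  intro σ hσ
  rw [Set.uIcc_of_le h0] at hσ
  exact fc_eq ⟨hσ.1, hσ.2.trans htM⟩

lemma FF_sub (hf : Assumption2 M f) (hM0 : 0 ≤ M) (s t : ℝ) :
    FF M f t - FF M f s = ∫ σ in s..t, fc M f σ :=
  intervalIntegral.integral_interval_sub_left
    ((fc_cont hf hM0).intervalIntegrable _ _) ((fc_cont hf hM0).intervalIntegrable _ _)

lemma f_le_f (hf : Assumption2 M f) {s t : ℝ} (h0 : 0 ≤ s) (hst : s ≤ t) (htM : t ≤ M) :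
    f t ≤ f s :=
  hf.anti.antitoneOn ⟨h0, hst.trans htM⟩ ⟨h0.trans hst, htM⟩ hst

lemma FF_sub_le (hf : Assumption2 M f) (hM0 : 0 ≤ M) {s t : ℝ}
    (h0 : 0 ≤ s) (hst : s ≤ t) (htM : t ≤ M) :
    FF M f t - FF M f s ≤ (t - s) * f s := by
  rw [FF_sub hf hM0]
  calc ∫ σ in s..t, fc M f σ ≤ ∫ _σ in s..t, f s := by
        apply intervalIntegral.integral_mono_on hst
          ((fc_cont hf hM0).intervalIntegrable _ _) intervalIntegrable_const
        intro x hx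
        rw [fc_eq ⟨h0.trans hx.1, hx.2.trans htM⟩]
        exact f_le_f hf h0 hx.1 (hx.2.trans htM)
    _ = (t - s) * f s := by simp

lemma FF_sub_ge (hf : Assumption2 M f) (hM0 : 0 ≤ M) {s t : ℝ}
    (h0 : 0 ≤ s) (hst : s ≤ t) (htM : t ≤ M) :
    (t - s) * f t ≤ FF M f t - FF M f s := by
  rw [FF_sub hf hM0]
  calc ((t - s) * f t : ℝ) = ∫ _σ in s..t, f t := by simp
    _ ≤ ∫ σ in s..t, fc M f σ := by
        apply intervalIntegral.integral_mono_on hst intervalIntegrable_const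
          ((fc_cont hf hM0).intervalIntegrable _ _)
        intro x hx
        rw [fc_eq ⟨h0.trans hx.1, hx.2.trans htM⟩]
        exact f_le_f hf (h0.trans hx.1) hx.2 htM

lemma FF_sub_lt (hf : Assumption2 M f) (hM0 : 0 ≤ M) {s t : ℝ}
    (h0 : 0 ≤ s) (hst : s < t) (htM : t ≤ M) :
    FF M f t - FF M f s < (t - s) * f s := by
  set m := (s + t) / 2 with hm
  have hsm : s < m := by rw [hm]; linarith
  have hmt : m < t := by rw [hm]; linarith
  have h1 : FF M f m - FF M f s ≤ (m - s) * f s :=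
    FF_sub_le hf hM0 h0 hsm.le (hmt.le.trans htM)
  have h2 : FF M f t - FF M f m ≤ (t - m) * f m :=
    FF_sub_le hf hM0 (h0.trans hsm.le) hmt.le htM
  have h3 : f m < f s := hf.anti ⟨h0, hsm.le.trans (hmt.le.trans htM)⟩
    ⟨h0.trans hsm.le, hmt.le.trans htM⟩ hsm
  nlinarith [sub_pos.2 hmt]

lemma FF_sub_gt (hf : Assumption2 M f) (hM0 : 0 ≤ M) {s t : ℝ}
    (h0 : 0 ≤ s) (hst : s < t) (htM : t ≤ M) :
    (t - s) * f t < FF M f t - FF M f s := by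
  set m := (s + t) / 2 with hm
  have hsm : s < m := by rw [hm]; linarith
  have hmt : m < t := by rw [hm]; linarith
  have h1 : (m - s) * f m ≤ FF M f m - FF M f s :=
    FF_sub_ge hf hM0 h0 hsm.le (hmt.le.trans htM)
  have h2 : (t - m) * f t ≤ FF M f t - FF M f m :=
    FF_sub_ge hf hM0 (h0.trans hsm.le) hmt.le htM
  have h3 : f t < f m := hf.anti ⟨h0.trans hsm.le, hmt.le.trans htM⟩
    ⟨h0.trans hst.le, htM⟩ hmt
  nlinarith [sub_pos.2 hsm]

lemma f_lt_PP (hf : Assumption2 M f) (hM0 : 0 ≤ M) {t : ℝ} (ht : 0 < t) (htM : t ≤ M) :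
    f t < PP M f t := by
  have := FF_sub_gt hf hM0 le_rfl ht htM
  rw [FF_zero] at this
  rw [PP, lt_div_iff₀ ht]
  linarith

lemma PP_lt_one (hf : Assumption2 M f) (hM0 : 0 ≤ M) {t : ℝ} (ht : 0 < t) (htM : t ≤ M) :
    PP M f t < 1 := by
  have := FF_sub_lt hf hM0 le_rfl ht htM
  rw [FF_zero, hf.f_zero] at this
  rw [PP, div_lt_iff₀ ht]
  linarith

lemma AA_pos (hf : Assumption2 M f) (hM0 : 0 ≤ M) {t : ℝ} (ht : 0 < t) (htM : t ≤ M) :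
    0 < AA M f t := sub_pos.2 (f_lt_PP hf hM0 ht htM)

lemma PP_pos (hf : Assumption2 M f) (hM0 : 0 ≤ M) {t : ℝ} (ht : 0 < t) (htM : t ≤ M) :
    0 < PP M f t :=
  lt_trans (hf.mem t ⟨ht.le, htM⟩).1 (f_lt_PP hf hM0 ht htM)

lemma PP_anti (hf : Assumption2 M f) (hM0 : 0 ≤ M) {t₁ t₂ : ℝ}
    (h1 : 0 < t₁) (h12 : t₁ < t₂) (h2M : t₂ ≤ M) :
    PP M f t₂ < PP M f t₁ := by
  have hlt : FF M f t₂ - FF M f t₁ < (t₂ - t₁) * f t₁ :=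
    FF_sub_lt hf hM0 h1.le h12 h2M
  have hfP : f t₁ < PP M f t₁ := f_lt_PP hf hM0 h1 (h12.le.trans h2M)
  have ht₁ : FF M f t₁ = PP M f t₁ * t₁ := by
    rw [PP, div_mul_cancel₀ _ (ne_of_gt h1)]
  rw [PP, div_lt_iff₀ (lt_trans h1 h12)]
  nlinarith

lemma PP_anti_le (hf : Assumption2 M f) (hM0 : 0 ≤ M) {t₁ t₂ : ℝ}
    (h1 : 0 < t₁) (h12 : t₁ ≤ t₂) (h2M : t₂ ≤ M) :
    PP M f t₂ ≤ PP M f t₁ := by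
  rcases eq_or_lt_of_le h12 with rfl | hlt
  · exact le_rfl
  · exact (PP_anti hf hM0 h1 hlt h2M).le

lemma AA_le (hf : Assumption2 M f) (hM0 : 0 ≤ M) {t : ℝ} (ht : 0 < t) (htM : t ≤ M) :
    AA M f t ≤ 1 - f t :=
  sub_le_sub_right (PP_lt_one hf hM0 ht htM).le _

lemma df_contOn (hf : Assumption2 M f) (hM0 : 0 < M) : ContinuousOn (df M f) (Icc 0 M) :=
  hf.smooth.continuousOn_derivWithin (uniqueDiffOn_Icc hM0) (by norm_num)

lemma f_hasDerivAt (hf : Assumption2 M f) {t : ℝ} (ht : t ∈ Ioo (0:ℝ) M) :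
    HasDerivAt f (df M f t) t := by
  have hmem : Icc (0:ℝ) M ∈ nhds t := Icc_mem_nhds ht.1 ht.2
  have hd : DifferentiableOn ℝ f (Icc 0 M) := hf.smooth.differentiableOn (by norm_num)
  have h1 : DifferentiableAt ℝ f t :=
    (hd t ⟨ht.1.le, ht.2.le⟩).differentiableAt hmem
  have h2 : df M f t = deriv f t := derivWithin_of_mem_nhds hmem
  rw [df] at h2 ⊢
  rw [h2]
  exact h1.hasDerivAt

lemma tangent (hf : Assumption2 M f) {t σ : ℝ}
    (htM : t ≤ M) (hσ : 0 ≤ σ) (hσt : σ < t) :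
    f t + df M f t * (σ - t) ≤ f σ := by
  obtain ⟨ξ, hξ, hslope⟩ := exists_hasDerivAt_eq_slope f (df M f) hσt
    (hf.smooth.continuousOn.mono (Icc_subset_Icc hσ htM))
    (fun x hx => f_hasDerivAt hf ⟨lt_of_le_of_lt hσ hx.1, lt_of_lt_of_le hx.2 htM⟩)
  have hmono : df M f ξ ≤ df M f t :=
    hf.deriv_mono ⟨hσ.trans hξ.1.le, hξ.2.le.trans htM⟩
      ⟨hσ.trans hσt.le, htM⟩ hξ.2.le
  have h2 : f t - f σ = df M f ξ * (t - σ) := by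
    rw [hslope, div_mul_cancel₀ _ (ne_of_gt (sub_pos.2 hσt))]
  nlinarith [sub_pos.2 hσt, mul_le_mul_of_nonneg_right hmono (sub_pos.2 hσt).le]

lemma key_ineq (hf : Assumption2 M f) (hM0 : 0 ≤ M) {t : ℝ} (ht : 0 < t) (htM : t ≤ M) :
    0 ≤ 2 * (FF M f t - t * f t) + t^2 * df M f t := by
  have hintle : ∫ σ in (0:ℝ)..t, (f t + df M f t * (σ - t)) ≤ ∫ σ in (0:ℝ)..t, fc M f σ := by
    apply intervalIntegral.integral_mono_on ht.le
    · exact Continuous.intervalIntegrable (by fun_prop) _ _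
    · exact (fc_cont hf hM0).intervalIntegrable _ _
    · intro σ hσ
      rw [fc_eq ⟨hσ.1, hσ.2.trans htM⟩]
      rcases eq_or_lt_of_le hσ.2 with rfl | hlt
      · simp
      · exact tangent hf htM hσ.1 hlt
  have hval : ∫ σ in (0:ℝ)..t, (f t + df M f t * (σ - t))
      = t * f t + df M f t * (t^2/2 - t^2) := by
    rw [intervalIntegral.integral_add intervalIntegrable_const
      (Continuous.intervalIntegrable (by fun_prop) _ _)]
    rw [intervalIntegral.integral_const_mul]
    rw [intervalIntegral.integral_sub (Continuous.intervalIntegrable (by fun_prop) _ _)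
      intervalIntegrable_const]
    rw [integral_id]
    simp only [intervalIntegral.integral_const, smul_eq_mul]
    ring
  rw [hval] at hintle
  have : FF M f t = ∫ σ in (0:ℝ)..t, fc M f σ := rfl
  nlinarith [hintle]

lemma W_hasDerivAt (hf : Assumption2 M f) (hM0 : 0 ≤ M) {t : ℝ} (ht : t ∈ Ioo (0:ℝ) M) :
    HasDerivAt (fun u => AA M f u / u)
      (-(2 * (FF M f t - t * f t) + t^2 * df M f t) / t^3) t := by
  have ht0 : t ≠ 0 := ne_of_gt ht.1
  have h1 : HasDerivAt (FF M f) (f t) t := by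
    have := FF_hasDerivAt hf hM0 t
    rwa [fc_eq ⟨ht.1.le, ht.2.le⟩] at this
  have h2 : HasDerivAt f (df M f t) t := f_hasDerivAt hf ht
  have h3 : HasDerivAt (fun u => FF M f u / u - f u)
      ((f t * t - FF M f t * 1) / t^2 - df M f t) t :=
    (h1.div (hasDerivAt_id t) ht0).sub h2
  have h4 : HasDerivAt (fun u => (FF M f u / u - f u) / u)
      ((((f t * t - FF M f t * 1) / t^2 - df M f t) * t - (FF M f t / t - f t) * 1) / t^2) t :=
    h3.div (hasDerivAt_id t) ht0
  have heq : (fun u => AA M f u / u) = (fun u => (FF M f u / u - f u) / u) := rfl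
  rw [heq]
  convert h4 using 1
  field_simp
  ring

lemma W_contOn (hf : Assumption2 M f) (hM0 : 0 ≤ M) :
    ContinuousOn (fun u => AA M f u / u) (Ioc 0 M) := by
  apply ContinuousOn.div
  · apply ContinuousOn.sub
    · exact ((FF_cont hf hM0).continuousOn).div continuousOn_id
        (fun x hx => ne_of_gt hx.1)
    · exact hf.smooth.continuousOn.mono Ioc_subset_Icc_self
  · exact continuousOn_id
  · exact fun x hx => ne_of_gt hx.1

lemma W_anti (hf : Assumption2 M f) (hM0 : 0 ≤ M) :
    AntitoneOn (fun u => AA M f u / u) (Ioc 0 M) := by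
  have hMpos : 0 < M → True := fun _ => trivial
  apply antitoneOn_of_deriv_nonpos (convex_Ioc 0 M)
  · exact W_contOn hf hM0
  · rw [interior_Ioc]
    intro t htt
    exact (W_hasDerivAt hf hM0 htt).differentiableAt.differentiableWithinAt
  · rw [interior_Ioc]
    intro t htt
    rw [(W_hasDerivAt hf hM0 htt).deriv]
    apply div_nonpos_of_nonpos_of_nonneg
    · linarith [key_ineq hf hM0 htt.1 htt.2.le]
    · have := htt.1
      positivity

lemma Q_anti (hf : Assumption2 M f) (hM0 : 0 ≤ M) {c : ℝ} (hc : 0 ≤ c) :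
    AntitoneOn (fun t => f t + c * (AA M f t / t)) (Ioc 0 M) := by
  intro x hx y hy hxy
  have h1 : f y ≤ f x := f_le_f hf hx.1.le hxy hy.2
  have h2 : AA M f y / y ≤ AA M f x / x := W_anti hf hM0 hx hy hxy
  nlinarith [mul_le_mul_of_nonneg_left h2 hc]

def hfun (M : ℝ) (f : ℝ → ℝ) (r c : ℝ) : ℝ → ℝ :=
  fun x => x - (1+r) * (FF M f (c+x) - c * (FF M f (c+x) / (c+x)))

lemma hfun_zero_c (r : ℝ) : hfun M f r 0 = fun x => x - (1+r) * FF M f x := by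
  funext x
  simp [hfun]

lemma hfun_contOn (hf : Assumption2 M f) (hM0 : 0 ≤ M) {r c : ℝ} (hc : 0 ≤ c) :
    ContinuousOn (hfun M f r c) (Ici 0) := by
  rcases eq_or_lt_of_le hc with rfl | hcpos
  · rw [hfun_zero_c]
    exact (continuous_id.sub (continuous_const.mul (FF_cont hf hM0))).continuousOn
  · apply ContinuousOn.sub continuousOn_id
    apply ContinuousOn.mul continuousOn_const
    apply ContinuousOn.sub
    · exact ((FF_cont hf hM0).comp (continuous_const.add continuous_id)).continuousOn
    · apply ContinuousOn.mul continuousOn_const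
      apply ContinuousOn.div
      · exact ((FF_cont hf hM0).comp (continuous_const.add continuous_id)).continuousOn
      · exact (continuous_const.add continuous_id).continuousOn
      · intro x hx
        have : (0:ℝ) ≤ x := hx
        positivity

lemma hfun_hasDerivAt (hf : Assumption2 M f) (hM0 : 0 ≤ M) {r c x : ℝ} (hc : 0 ≤ c)
    (ht : 0 < c + x) (htM : c + x < M) :
    HasDerivAt (hfun M f r c)
      (1 - (1+r) * (f (c+x) + c * (AA M f (c+x) / (c+x)))) x := by
  have ht0 : c + x ≠ 0 := ne_of_gt ht
  have h0 : HasDerivAt (fun y : ℝ => c + y) 1 x := by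
    simpa using (hasDerivAt_id x).const_add c
  have h1 : HasDerivAt (fun y => FF M f (c+y)) (f (c+x)) x := by
    have := ((FF_hasDerivAt hf hM0 (c+x)).comp x h0)
    rw [fc_eq ⟨ht.le, htM.le⟩, mul_one] at this
    exact this
  have h2 : HasDerivAt (fun y => FF M f (c+y) / (c+y))
      ((f (c+x) * (c+x) - FF M f (c+x) * 1) / (c+x)^2) x := h1.div h0 ht0
  have h3 : HasDerivAt (hfun M f r c)
      (1 - (1+r) * (f (c+x) - c * ((f (c+x) * (c+x) - FF M f (c+x) * 1) / (c+x)^2))) x :=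
    (hasDerivAt_id x).sub ((h1.sub (h2.const_mul c)).const_mul (1+r))
  convert h3 using 1
  have hAA : AA M f (c+x) = FF M f (c+x) / (c+x) - f (c+x) := rfl
  rw [hAA]
  field_simp
  ring

lemma hfun_monoOn (hf : Assumption2 M f) (hM0 : 0 ≤ M) {r c x₀ x₁ : ℝ}
    (hc : 0 ≤ c) (h0 : 0 ≤ x₀) (hM' : c + x₁ ≤ M)
    (hQ : ∀ t, c + x₀ < t → t < c + x₁ → (1+r) * (f t + c * (AA M f t / t)) ≤ 1) :
    MonotoneOn (hfun M f r c) (Icc x₀ x₁) := by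
  apply monotoneOn_of_deriv_nonneg (convex_Icc x₀ x₁)
  · exact (hfun_contOn hf hM0 hc).mono (fun x hx => h0.trans hx.1)
  · rw [interior_Icc]
    intro x hx
    exact (hfun_hasDerivAt hf hM0 hc (by linarith [hx.1]) (by linarith [hx.2])
      ).differentiableAt.differentiableWithinAt
  · rw [interior_Icc]
    intro x hx
    rw [(hfun_hasDerivAt hf hM0 hc (by linarith [hx.1]) (by linarith [hx.2])).deriv]
    have := hQ (c+x) (by linarith [hx.1]) (by linarith [hx.2])
    linarith

lemma hfun_antiOn (hf : Assumption2 M f) (hM0 : 0 ≤ M) {r c x₀ x₁ : ℝ}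
    (hc : 0 ≤ c) (h0 : 0 ≤ x₀) (hM' : c + x₁ ≤ M)
    (hQ : ∀ t, c + x₀ < t → t < c + x₁ → 1 ≤ (1+r) * (f t + c * (AA M f t / t))) :
    AntitoneOn (hfun M f r c) (Icc x₀ x₁) := by
  apply antitoneOn_of_deriv_nonpos (convex_Icc x₀ x₁)
  · exact (hfun_contOn hf hM0 hc).mono (fun x hx => h0.trans hx.1)
  · rw [interior_Icc]
    intro x hx
    exact (hfun_hasDerivAt hf hM0 hc (by linarith [hx.1]) (by linarith [hx.2])
      ).differentiableAt.differentiableWithinAt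
  · rw [interior_Icc]
    intro x hx
    rw [(hfun_hasDerivAt hf hM0 hc (by linarith [hx.1]) (by linarith [hx.2])).deriv]
    have := hQ (c+x) (by linarith [hx.1]) (by linarith [hx.2])
    linarith

lemma hfun_strictMonoOn (hf : Assumption2 M f) (hM0 : 0 ≤ M) {r c x₀ x₁ : ℝ}
    (hc : 0 ≤ c) (h0 : 0 ≤ x₀) (hM' : c + x₁ ≤ M)
    (hQ : ∀ t, c + x₀ < t → t < c + x₁ → (1+r) * (f t + c * (AA M f t / t)) < 1) :
    StrictMonoOn (hfun M f r c) (Icc x₀ x₁) := by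
  apply strictMonoOn_of_deriv_pos (convex_Icc x₀ x₁)
  · exact (hfun_contOn hf hM0 hc).mono (fun x hx => h0.trans hx.1)
  · rw [interior_Icc]
    intro x hx
    rw [(hfun_hasDerivAt hf hM0 hc (by linarith [hx.1]) (by linarith [hx.2])).deriv]
    have := hQ (c+x) (by linarith [hx.1]) (by linarith [hx.2])
    linarith

lemma hfun_strictAntiOn (hf : Assumption2 M f) (hM0 : 0 ≤ M) {r c x₀ x₁ : ℝ}
    (hc : 0 ≤ c) (h0 : 0 ≤ x₀) (hM' : c + x₁ ≤ M)
    (hQ : ∀ t, c + x₀ < t → t < c + x₁ → 1 < (1+r) * (f t + c * (AA M f t / t))) :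
    StrictAntiOn (hfun M f r c) (Icc x₀ x₁) := by
  apply strictAntiOn_of_deriv_neg (convex_Icc x₀ x₁)
  · exact (hfun_contOn hf hM0 hc).mono (fun x hx => h0.trans hx.1)
  · rw [interior_Icc]
    intro x hx
    rw [(hfun_hasDerivAt hf hM0 hc (by linarith [hx.1]) (by linarith [hx.2])).deriv]
    have := hQ (c+x) (by linarith [hx.1]) (by linarith [hx.2])
    linarith

section Game

variable {n : ℕ} {a h : Fin n → ℝ} {q : ℝ} {qb : Fin n → ℝ}

def LL (a h : Fin n → ℝ) (q : ℝ) (qb : Fin n → ℝ) (i : Fin n) : ℝ :=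
  if h i ≤ a i * qb i then max 0 ((h i - a i * q) / (qb i - q)) else a i

def UU (a h : Fin n → ℝ) (qb : Fin n → ℝ) (i : Fin n) : ℝ :=
  if h i ≤ a i * qb i then h i / qb i else a i

lemma LU_bounds (ha : ∀ i, 0 < a i) (hh : ∀ i, 0 < h i)
    (hq : q ∈ Set.Ioc (0:ℝ) 1) (hqb : ∀ i, qb i ∈ Set.Ioc (0:ℝ) 1) (hlt : ∀ i, q < qb i)
    (i : Fin n) :
    0 ≤ LL a h q qb i ∧ LL a h q qb i ≤ UU a h qb i ∧ UU a h qb i ≤ a i ∧ 0 < UU a h qb i := by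
  have hq0 := hq.1
  have hqb0 := (hqb i).1
  have hqlt := hlt i
  unfold LL UU
  by_cases hfe : h i ≤ a i * qb i
  · simp only [if_pos hfe]
    have hU0 : 0 < h i / qb i := div_pos (hh i) hqb0
    have hUa : h i / qb i ≤ a i := by
      rw [div_le_iff₀ hqb0]; linarith
    have hLU : (h i - a i * q) / (qb i - q) ≤ h i / qb i := by
      rw [div_le_div_iff₀ (by linarith) hqb0]
      nlinarith
    exact ⟨le_max_left _ _, max_le hU0.le hLU, hUa, hU0⟩
  · simp only [if_neg hfe]
    exact ⟨(ha i).le, le_rfl, le_rfl, ha i⟩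

lemma feas_iff (ha : ∀ i, 0 < a i) (hh : ∀ i, 0 < h i)
    (hq : q ∈ Set.Ioc (0:ℝ) 1) (hqb : ∀ i, qb i ∈ Set.Ioc (0:ℝ) 1) (hlt : ∀ i, q < qb i)
    {i : Fin n} (hfe : h i ≤ a i * qb i) (x : ℝ) :
    feasP2 n a h q qb i x ↔ x ∈ Set.Icc (LL a h q qb i) (UU a h qb i) := by
  obtain ⟨hL0, hLU, hUa, hU0⟩ := LU_bounds ha hh hq hqb hlt i
  unfold feasP2 LL UU
  simp only [if_pos hfe]
  rw [Set.mem_Icc, Set.mem_Icc]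
  constructor
  · rintro ⟨⟨h1, _⟩, h3, h4⟩
    exact ⟨max_le h1 h4, h3⟩
  · rintro ⟨h1, h2⟩
    have hx0 : 0 ≤ x := le_trans (le_max_left _ _) h1
    have hxa : x ≤ a i := by
      unfold UU at hUa
      rw [if_pos hfe] at hUa
      exact h2.trans hUa
    exact ⟨⟨hx0, hxa⟩, h2, le_trans (le_max_right _ _) h1⟩

def cOf (s : Fin n → ℝ) (i : Fin n) : ℝ := ∑ j ∈ Finset.univ.erase i, s j

lemma sum_eq_cOf (s : Fin n → ℝ) (i : Fin n) : ∑ j, s j = cOf s i + s i := by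
  rw [cOf, add_comm]
  rw [← Finset.sum_erase_add Finset.univ s (Finset.mem_univ i)]
  ring

lemma sum_update_eq (s : Fin n → ℝ) (i : Fin n) (x : ℝ) :
    ∑ j, Function.update s i x j = cOf s i + x := by
  rw [Finset.sum_update_of_mem (Finset.mem_univ i), add_comm, cOf]
  congr 1
  rw [Finset.erase_eq]

lemma cOf_nonneg {s : Fin n → ℝ} (hs : ∀ j, 0 ≤ s j) (i : Fin n) : 0 ≤ cOf s i :=
  Finset.sum_nonneg fun j _ => hs j

lemma cOf_le {s : Fin n → ℝ} (hs : ∀ j, s j ≤ a j) (i : Fin n) :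
    cOf s i + a i ≤ ∑ j, a j := by
  rw [← Finset.sum_erase_add Finset.univ a (Finset.mem_univ i)]
  have : cOf s i ≤ ∑ j ∈ Finset.univ.erase i, a j :=
    Finset.sum_le_sum fun j _ => hs j
  linarith

variable {M r : ℝ} {f : ℝ → ℝ}

lemma obj_eq (hf : Assumption2 M f) (hM0 : 0 ≤ M) (hM : ∑ j, a j ≤ M)
    {s : Fin n → ℝ} (hs : ∀ j, s j ∈ Set.Icc 0 (a j)) (i : Fin n) {x : ℝ}
    (hx0 : 0 ≤ x) (hxa : x ≤ a i) (hh : Fin n → ℝ) :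
    obj n r hh (vwap n f) i (Function.update s i x) = hfun M f r (cOf s i) x + r * hh i := by
  have hsum := sum_update_eq s i x
  have hc0 : 0 ≤ cOf s i := cOf_nonneg (fun j => (hs j).1) i
  have hcM : cOf s i + x ≤ M := by
    have := cOf_le (fun j => (hs j).2) i
    linarith
  rw [obj, Function.update_self, vwap, hsum]
  by_cases ht : cOf s i + x = 0
  · have hx : x = 0 := by linarith
    rw [if_pos ht, hfun, ht, FF_zero, hx]
    ring
  · have htpos : 0 < cOf s i + x := lt_of_le_of_ne (by linarith) (Ne.symm ht)
    rw [if_neg ht, hfun]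
    rw [← FF_eq hf hM0 htpos.le hcM]
    field_simp
    ring

lemma obj_self_eq (hf : Assumption2 M f) (hM0 : 0 ≤ M) (hM : ∑ j, a j ≤ M)
    {s : Fin n → ℝ} (hs : ∀ j, s j ∈ Set.Icc 0 (a j)) (i : Fin n) (hh : Fin n → ℝ) :
    obj n r hh (vwap n f) i s = hfun M f r (cOf s i) (s i) + r * hh i := by
  conv_lhs => rw [← Function.update_eq_self i s]
  exact obj_eq hf hM0 hM hs i (hs i).1 (hs i).2 hh

end Game

section Nec

variable {n : ℕ} {a h : Fin n → ℝ} {q : ℝ} {qb : Fin n → ℝ} {M r : ℝ} {f : ℝ → ℝ}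

/-- The marginal quantity `Q` at total `t` with competitors' total `c`. -/
def QQ (M : ℝ) (f : ℝ → ℝ) (r c t : ℝ) : ℝ := (1+r) * (f t + c * (AA M f t / t))

lemma QQ_contOn (hf : Assumption2 M f) (hM0 : 0 ≤ M) (r c : ℝ) :
    ContinuousOn (QQ M f r c) (Ioc 0 M) := by
  apply ContinuousOn.mul continuousOn_const
  exact (hf.smooth.continuousOn.mono Ioc_subset_Icc_self).add
    (continuousOn_const.mul (W_contOn hf hM0))

lemma QQ_share {T si : ℝ} (hT : T ≠ 0) (r : ℝ) :
    QQ M f r (T - si) T = (1+r) * (PP M f T - si / T * AA M f T) := by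
  rw [QQ, AA]
  congr 1
  field_simp
  ring

/-- If `s` is a Nash equilibrium, bank `i` is in the feasible branch, and `sᵢ < Uᵢ`,
then the right first-order condition holds. -/
lemma necR (hf : Assumption2 M f) (hM0 : 0 ≤ M) (hM : ∑ j, a j ≤ M)
    (ha : ∀ i, 0 < a i) (hh : ∀ i, 0 < h i) (hr : 0 ≤ r)
    (hq : q ∈ Set.Ioc (0:ℝ) 1) (hqb : ∀ i, qb i ∈ Set.Ioc (0:ℝ) 1) (hlt : ∀ i, q < qb i)
    {s : Fin n → ℝ} (hmem : memD n a s) (hN : NashP2 n a h r q qb (vwap n f) s)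
    {i : Fin n} (hfe : h i ≤ a i * qb i)
    (hsU : s i < UU a h qb i) (hT : 0 < ∑ j, s j) :
    QQ M f r (cOf s i) (∑ j, s j) ≤ 1 := by
  obtain ⟨hL0, hLU, hUa, hU0⟩ := LU_bounds ha hh hq hqb hlt i
  set T := ∑ j, s j with hTdef
  set c := cOf s i with hcdef
  have hfeas := (hN i).1 hfe
  have hsi : s i ∈ Set.Icc (LL a h q qb i) (UU a h qb i) :=
    (feas_iff ha hh hq hqb hlt hfe _).1 hfeas.1
  have hsi0 : 0 ≤ s i := hL0.trans hsi.1
  have hc0 : 0 ≤ c := cOf_nonneg (fun j => (hmem j).1) i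
  have hTc : T = c + s i := sum_eq_cOf s i
  have hcUM : c + UU a h qb i ≤ M := by
    have h1 := cOf_le (hs := fun j => (hmem j).2) i
    have := hUa
    linarith
  by_contra hcon
  push_neg at hcon
  have hTM : T ≤ M := by
    rw [hTc]; linarith [hsU]
  have hTmem : T ∈ Ioc (0:ℝ) M := ⟨hT, hTM⟩
  have hev : ∀ᶠ t in nhdsWithin T (Ioc 0 M), 1 < QQ M f r c t :=
    (QQ_contOn hf hM0 r c T hTmem).eventually (eventually_gt_nhds hcon)
  obtain ⟨δ, hδ, hball⟩ := Metric.mem_nhdsWithin_iff.1 hev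
  set y := min (UU a h qb i) (s i + δ/2) with hy
  have hsy : s i < y := lt_min hsU (by linarith)
  have hyU : y ≤ UU a h qb i := min_le_left _ _
  have hanti : StrictAntiOn (hfun M f r c) (Icc (s i) y) := by
    apply hfun_strictAntiOn hf hM0 hc0 hsi0 (by linarith)
    intro t h1 h2
    have ht0 : 0 < t := by rw [hTc] at hT; linarith
    have htM : t ≤ M := by linarith
    have hdist : dist t T < δ := by
      rw [Real.dist_eq, abs_of_nonneg (by rw [hTc]; linarith)]
      rw [hTc]
      have : y ≤ s i + δ/2 := min_le_right _ _
      linarith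
    exact hball ⟨hdist, ht0, htM⟩
  have hvlt : hfun M f r c y < hfun M f r c (s i) :=
    hanti ⟨le_rfl, hsy.le⟩ ⟨hsy.le, le_rfl⟩ hsy
  have hyfeas : feasP2 n a h q qb i y :=
    (feas_iff ha hh hq hqb hlt hfe _).2 ⟨hsi.1.trans hsy.le, hyU⟩
  have hopt := hfeas.2 y hyfeas
  rw [obj_self_eq hf hM0 hM hmem i h,
      obj_eq hf hM0 hM hmem i (hsi0.trans hsy.le) (hyU.trans hUa) h] at hopt
  rw [← hcdef] at hopt
  linarith

/-- If `s` is a Nash equilibrium, bank `i` is in the feasible branch, and `Lᵢ < sᵢ`,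
then the left first-order condition holds. -/
lemma necL (hf : Assumption2 M f) (hM0 : 0 ≤ M) (hM : ∑ j, a j ≤ M)
    (ha : ∀ i, 0 < a i) (hh : ∀ i, 0 < h i) (hr : 0 ≤ r)
    (hq : q ∈ Set.Ioc (0:ℝ) 1) (hqb : ∀ i, qb i ∈ Set.Ioc (0:ℝ) 1) (hlt : ∀ i, q < qb i)
    {s : Fin n → ℝ} (hmem : memD n a s) (hN : NashP2 n a h r q qb (vwap n f) s)
    {i : Fin n} (hfe : h i ≤ a i * qb i)
    (hsL : LL a h q qb i < s i) :
    1 ≤ QQ M f r (cOf s i) (∑ j, s j) := by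
  obtain ⟨hL0, hLU, hUa, hU0⟩ := LU_bounds ha hh hq hqb hlt i
  set T := ∑ j, s j with hTdef
  set c := cOf s i with hcdef
  have hfeas := (hN i).1 hfe
  have hsi : s i ∈ Set.Icc (LL a h q qb i) (UU a h qb i) :=
    (feas_iff ha hh hq hqb hlt hfe _).1 hfeas.1
  have hsi0 : 0 ≤ s i := hL0.trans hsi.1
  have hc0 : 0 ≤ c := cOf_nonneg (fun j => (hmem j).1) i
  have hTc : T = c + s i := sum_eq_cOf s i
  have hT : 0 < T := by
    rw [hTc]
    have : 0 < s i := lt_of_le_of_lt hL0 hsL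
    linarith
  have hTM : T ≤ M := by
    have h1 := cOf_le (hs := fun j => (hmem j).2) i
    rw [hTc]
    linarith [hsi.2.trans hUa]
  by_contra hcon
  push_neg at hcon
  have hTmem : T ∈ Ioc (0:ℝ) M := ⟨hT, hTM⟩
  have hev : ∀ᶠ t in nhdsWithin T (Ioc 0 M), QQ M f r c t < 1 :=
    (QQ_contOn hf hM0 r c T hTmem).eventually (eventually_lt_nhds hcon)
  obtain ⟨δ, hδ, hball⟩ := Metric.mem_nhdsWithin_iff.1 hev
  set y := max ((LL a h q qb i + s i)/2) (s i - δ/2) with hy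
  have hLy : LL a h q qb i < y := lt_max_of_lt_left (by linarith)
  have hys : y < s i := max_lt (by linarith) (by linarith)
  have hy0 : 0 ≤ y := hL0.trans hLy.le
  have hmono : StrictMonoOn (hfun M f r c) (Icc y (s i)) := by
    apply hfun_strictMonoOn hf hM0 hc0 hy0 (by rw [← hTc]; exact hTM)
    intro t h1 h2
    have ht0 : 0 < t := by linarith
    have htM : t ≤ M := by rw [hTc] at hTM; linarith
    have hdist : dist t T < δ := by
      rw [Real.dist_eq, abs_of_nonpos (by rw [hTc]; linarith)]
      rw [hTc]
      have : s i - δ/2 ≤ y := le_max_right _ _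
      linarith
    exact hball ⟨hdist, ht0, htM⟩
  have hvlt : hfun M f r c y < hfun M f r c (s i) :=
    hmono ⟨le_rfl, hys.le⟩ ⟨hys.le, le_rfl⟩ hys
  have hyfeas : feasP2 n a h q qb i y :=
    (feas_iff ha hh hq hqb hlt hfe _).2 ⟨hLy.le, hys.le.trans hsi.2⟩
  have hopt := hfeas.2 y hyfeas
  rw [obj_self_eq hf hM0 hM hmem i h,
      obj_eq hf hM0 hM hmem i hy0 ((hys.le.trans hsi.2).trans hUa) h] at hopt
  rw [← hcdef] at hopt
  linarith

end Nec

section Exist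

variable {n : ℕ} {a h : Fin n → ℝ} {q : ℝ} {qb : Fin n → ℝ} {M r : ℝ} {f : ℝ → ℝ}

lemma Q_le_PP (hf : Assumption2 M f) (hM0 : 0 ≤ M) {c t : ℝ}
    (hc : 0 ≤ c) (hct : c ≤ t) (ht : 0 < t) (htM : t ≤ M) :
    f t + c * (AA M f t / t) ≤ PP M f t := by
  have hA := AA_pos hf hM0 ht htM
  have h1 : c * (AA M f t / t) ≤ t * (AA M f t / t) :=
    mul_le_mul_of_nonneg_right hct (by positivity)
  have h2 : t * (AA M f t / t) = AA M f t := by field_simp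
  rw [AA] at *
  linarith

/-- The candidate interior liquidation level at total `t`. -/
def BB (M : ℝ) (f : ℝ → ℝ) (r t : ℝ) : ℝ :=
  t * ((1+r) * PP M f t - 1) / ((1+r) * AA M f t)

lemma foc_right_iff (hf : Assumption2 M f) (hM0 : 0 ≤ M) {T si : ℝ}
    (hr : 0 ≤ r) (hT : 0 < T) (hTM : T ≤ M) :
    QQ M f r (T - si) T ≤ 1 ↔ BB M f r T ≤ si := by
  have hA := AA_pos hf hM0 hT hTM
  have h1r : (0:ℝ) < 1 + r := by linarith
  rw [QQ_share (ne_of_gt hT), BB, div_le_iff₀ (by positivity)]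
  rw [← mul_le_mul_iff_of_pos_right hT]
  have hTne : T ≠ 0 := ne_of_gt hT
  have key : (1+r) * (PP M f T - si / T * AA M f T) * T
      = (1+r) * (T * PP M f T - si * AA M f T) := by
    field_simp
  rw [key]
  constructor <;> intro H <;> nlinarith

lemma foc_left_iff (hf : Assumption2 M f) (hM0 : 0 ≤ M) {T si : ℝ}
    (hr : 0 ≤ r) (hT : 0 < T) (hTM : T ≤ M) :
    1 ≤ QQ M f r (T - si) T ↔ si ≤ BB M f r T := by
  have hA := AA_pos hf hM0 hT hTM
  have h1r : (0:ℝ) < 1 + r := by linarith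
  rw [QQ_share (ne_of_gt hT), BB, le_div_iff₀ (by positivity)]
  rw [← mul_le_mul_iff_of_pos_right hT]
  have hTne : T ≠ 0 := ne_of_gt hT
  have key : (1+r) * (PP M f T - si / T * AA M f T) * T
      = (1+r) * (T * PP M f T - si * AA M f T) := by
    field_simp
  rw [key]
  constructor <;> intro H <;> nlinarith

lemma BB_contOn (hf : Assumption2 M f) (hM0 : 0 ≤ M) (hr : 0 ≤ r) :
    ContinuousOn (BB M f r) (Ioc 0 M) := by
  have h1r : (0:ℝ) < 1 + r := by linarith
  apply ContinuousOn.div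
  · apply ContinuousOn.mul continuousOn_id
    apply ContinuousOn.sub _ continuousOn_const
    apply ContinuousOn.mul continuousOn_const
    exact ((FF_cont hf hM0).continuousOn).div continuousOn_id (fun x hx => ne_of_gt hx.1)
  · apply ContinuousOn.mul continuousOn_const
    apply ContinuousOn.sub
    · exact ((FF_cont hf hM0).continuousOn).div continuousOn_id (fun x hx => ne_of_gt hx.1)
    · exact hf.smooth.continuousOn.mono Ioc_subset_Icc_self
  · intro t htmem
    have hA := AA_pos hf hM0 htmem.1 htmem.2
    exact ne_of_gt (by positivity)

lemma one_sub_f_le (hf : Assumption2 M f) (hM0 : 0 < M) :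
    ∃ K > 0, ∀ t ∈ Icc (0:ℝ) M, 1 - f t ≤ K * t := by
  obtain ⟨ξ₀, hξ₀, hmax⟩ := isCompact_Icc.exists_isMaxOn (s := Icc (0:ℝ) M)
    ⟨0, ⟨le_rfl, hM0.le⟩⟩ ((df_contOn hf hM0).neg)
  refine ⟨max (-df M f ξ₀) 1, lt_of_lt_of_le one_pos (le_max_right _ _), ?_⟩
  intro t ht
  rcases eq_or_lt_of_le ht.1 with rfl | htpos
  · rw [hf.f_zero]
    simp
  · obtain ⟨ξ, hξ, hslope⟩ := exists_hasDerivAt_eq_slope f (df M f) htpos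
      (hf.smooth.continuousOn.mono (Icc_subset_Icc le_rfl ht.2))
      (fun x hx => f_hasDerivAt hf ⟨hx.1, hx.2.trans_le ht.2⟩)
    have heq : f t - f 0 = df M f ξ * t := by
      rw [hslope, sub_zero, div_mul_cancel₀ _ (ne_of_gt htpos)]
    have hle : -df M f ξ ≤ max (-df M f ξ₀) 1 :=
      le_trans (hmax ⟨hξ.1.le, hξ.2.le.trans ht.2⟩) (le_max_left _ _)
    rw [hf.f_zero] at heq
    nlinarith [mul_le_mul_of_nonneg_right hle htpos.le]

end Exist

section Main

variable {n : ℕ} {a h : Fin n → ℝ} {q : ℝ} {qb : Fin n → ℝ} {M r : ℝ} {f : ℝ → ℝ}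

lemma exists_equilibrium (hf : Assumption2 M f) (hM : ∑ j, a j ≤ M)
    (ha : ∀ i, 0 < a i) (hh : ∀ i, 0 < h i) (hr : 0 ≤ r)
    (hq : q ∈ Set.Ioc (0:ℝ) 1) (hqb : ∀ i, qb i ∈ Set.Ioc (0:ℝ) 1) (hlt : ∀ i, q < qb i)
    (hne : n ≠ 0) :
    ∃ s : Fin n → ℝ, memD n a s ∧ NashP2 n a h r q qb (vwap n f) s := by
  have hNe : Nonempty (Fin n) := Fin.pos_iff_nonempty.1 (Nat.pos_of_ne_zero hne)
  have hsum_pos : 0 < ∑ j, a j :=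
    Finset.sum_pos (fun i _ => ha i) Finset.univ_nonempty
  have hM0 : 0 < M := lt_of_lt_of_le hsum_pos hM
  have hM0' : 0 ≤ M := hM0.le
  have h1r : (0:ℝ) < 1 + r := by linarith
  have hLb := fun i => LU_bounds ha hh hq hqb hlt i
  have hLa : ∀ j, LL a h q qb j ≤ a j := fun j => (hLb j).2.1.trans (hLb j).2.2.1
  rcases eq_or_lt_of_le hr with hr0 | hrpos
  · -- interest rate r = 0 : everybody liquidates the minimum
    refine ⟨LL a h q qb, fun i => ⟨(hLb i).1, hLa i⟩, fun i => ⟨fun hfe => ?_, fun hinfe => ?_⟩⟩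
    · refine ⟨(feas_iff ha hh hq hqb hlt hfe _).2 ⟨le_rfl, (hLb i).2.1⟩, ?_⟩
      intro x hx
      rw [feas_iff ha hh hq hqb hlt hfe] at hx
      have hmemD : ∀ j, LL a h q qb j ∈ Set.Icc 0 (a j) := fun j => ⟨(hLb j).1, hLa j⟩
      set c := cOf (LL a h q qb) i with hcdef
      have hc0 : 0 ≤ c := cOf_nonneg (fun j => (hLb j).1) i
      have hcaM : c + a i ≤ M := le_trans (cOf_le hLa i) hM
      have hxU : x ≤ UU a h qb i := hx.2
      have hxa : x ≤ a i := hxU.trans (hLb i).2.2.1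
      have hmono : MonotoneOn (hfun M f r c) (Icc (LL a h q qb i) x) := by
        apply hfun_monoOn hf hM0' hc0 (hLb i).1 (by linarith)
        intro t h1 h2
        have ht0 : 0 < t := lt_of_le_of_lt (by linarith [(hLb i).1]) h1
        have htM : t ≤ M := by linarith
        have hct : c ≤ t := by linarith [(hLb i).1]
        have hq1 := Q_le_PP hf hM0' hc0 hct ht0 htM
        have hp1 := PP_lt_one hf hM0' ht0 htM
        rw [← hr0]
        linarith
      have hval : hfun M f r c (LL a h q qb i) ≤ hfun M f r c x :=
        hmono ⟨le_rfl, hx.1⟩ ⟨hx.1, le_rfl⟩ hx.1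
      rw [obj_self_eq hf hM0' hM hmemD i h,
          obj_eq hf hM0' hM hmemD i ((hLb i).1.trans hx.1) hxa h, ← hcdef]
      linarith
    · rw [LL, if_neg (not_le.2 hinfe)]
  · -- r > 0 : fixed point of the clamped best response via IVT
    set κ := 1 / (1+r) with hκdef
    have hκ0 : 0 < κ := by positivity
    have hκ1 : κ < 1 := by
      rw [hκdef, div_lt_one h1r]; linarith
    have hκr : κ * (1+r) = 1 := by
      rw [hκdef]; field_simp
    obtain ⟨K, hK0, hK⟩ := one_sub_f_le hf hM0
    -- continuity of f at 0 : f stays above (1+κ)/2 near 0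
    have hf0 : ContinuousWithinAt f (Icc 0 M) 0 :=
      hf.smooth.continuousOn 0 ⟨le_rfl, hM0'⟩
    have hev : ∀ᶠ t in nhdsWithin 0 (Icc 0 M), (1+κ)/2 < f t :=
      hf0.eventually (eventually_gt_nhds (by rw [hf.f_zero]; linarith))
    obtain ⟨δ, hδ, hball⟩ := Metric.mem_nhdsWithin_iff.1 hev
    set ε := r / (2 * (1+r) * K) with hεdef
    have hε0 : 0 < ε := by positivity
    have hεK : ε * ((1+r) * K) = r / 2 := by
      rw [hεdef]; field_simp
    have hβlb : ∀ t, 0 < t → t < δ → t ≤ M → ε ≤ BB M f r t := by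
      intro t ht0 htδ htM
      have hft : (1+κ)/2 < f t := by
        apply hball
        constructor
        · rw [Metric.mem_ball, Real.dist_eq, sub_zero, abs_of_nonneg ht0.le]
          exact htδ
        · exact ⟨ht0.le, htM⟩
      have hPf := f_lt_PP hf hM0' ht0 htM
      have hA := AA_pos hf hM0' ht0 htM
      have hAle : AA M f t ≤ K * t :=
        le_trans (AA_le hf hM0' ht0 htM) (hK t ⟨ht0.le, htM⟩)
      rw [BB, le_div_iff₀ (by positivity)]
      have h2 : (1+r) * f t - 1 ≥ r/2 := by nlinarith
      have h3 : ε * ((1+r) * AA M f t) ≤ ε * ((1+r) * (K * t)) := by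
        apply mul_le_mul_of_nonneg_left _ hε0.le
        apply mul_le_mul_of_nonneg_left hAle h1r.le
      have h4 : ε * ((1+r) * (K * t)) = r/2 * t := by
        rw [← hεK]; ring
      have h5 : (1+r) * f t ≤ (1+r) * PP M f t := mul_le_mul_of_nonneg_left hPf.le h1r.le
      nlinarith [mul_le_mul_of_nonneg_left h2 ht0.le, mul_le_mul_of_nonneg_left h5 ht0.le]
    set L := LL a h q qb with hLdef
    set U := UU a h qb with hUdef
    set SU := ∑ j, U j with hSUdef
    have hSU0 : 0 < SU := Finset.sum_pos (fun i _ => (hLb i).2.2.2) Finset.univ_nonempty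
    have hSUM : SU ≤ M := le_trans (Finset.sum_le_sum fun i _ => (hLb i).2.2.1) hM
    set η := ∑ j, min (U j) ε with hηdef
    have hη0 : 0 < η :=
      Finset.sum_pos (fun i _ => lt_min (hLb i).2.2.2 hε0) Finset.univ_nonempty
    set t₀ := min (min (δ/2) (SU/2)) (η/2) with ht₀def
    have ht₀0 : 0 < t₀ := by
      apply lt_min (lt_min _ _) <;> positivity
    have ht₀SU : t₀ ≤ SU := le_trans (min_le_left _ _) (le_trans (min_le_right _ _) (by linarith))
    have hsub : Icc t₀ SU ⊆ Ioc 0 M :=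
      fun x hx => ⟨lt_of_lt_of_le ht₀0 hx.1, hx.2.trans hSUM⟩
    set N := fun t => (∑ i, min (U i) (max (L i) (BB M f r t))) - t with hNdef
    have hNcont : ContinuousOn N (Icc t₀ SU) := by
      apply ContinuousOn.sub _ continuousOn_id
      apply continuousOn_finset_sum
      intro i _
      exact ContinuousOn.inf continuousOn_const
        (ContinuousOn.sup continuousOn_const ((BB_contOn hf hM0' hr).mono hsub))
    have hNt₀ : 0 < N t₀ := by
      have hβ : ε ≤ BB M f r t₀ := by
        apply hβlb t₀ ht₀0 _ (le_trans ht₀SU hSUM)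
        calc t₀ ≤ δ/2 := le_trans (min_le_left _ _) (min_le_left _ _)
          _ < δ := by linarith
      have hterm : ∀ i, min (U i) ε ≤ min (U i) (max (L i) (BB M f r t₀)) := by
        intro i
        exact min_le_min le_rfl (le_trans hβ (le_max_right _ _))
      have hsum' : η ≤ ∑ i, min (U i) (max (L i) (BB M f r t₀)) :=
        Finset.sum_le_sum fun i _ => hterm i
      have ht₀η : t₀ ≤ η/2 := min_le_right _ _
      rw [hNdef]
      simp only
      linarith
    have hNSU : N SU ≤ 0 := by
      have : ∑ i, min (U i) (max (L i) (BB M f r SU)) ≤ SU := by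
        rw [hSUdef]
        exact Finset.sum_le_sum fun i _ => min_le_left _ _
      rw [hNdef]
      simp only
      linarith
    obtain ⟨T, hTmem, hNT⟩ := intermediate_value_Icc' ht₀SU hNcont ⟨hNSU, hNt₀.le⟩
    have hT0 : 0 < T := lt_of_lt_of_le ht₀0 hTmem.1
    have hTM : T ≤ M := hTmem.2.trans hSUM
    set sbar := fun i => min (U i) (max (L i) (BB M f r T)) with hsdef
    have hsum : ∑ j, sbar j = T := by
      have : N T = 0 := hNT
      rw [hNdef] at this
      simp only at this
      linarith
    have hsLU : ∀ i, sbar i ∈ Icc (L i) (U i) := by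
      intro i
      exact ⟨le_min (hLb i).2.1 (le_max_left _ _), min_le_left _ _⟩
    have hmemD : ∀ j, sbar j ∈ Set.Icc 0 (a j) :=
      fun j => ⟨(hLb j).1.trans (hsLU j).1, (hsLU j).2.trans (hLb j).2.2.1⟩
    refine ⟨sbar, hmemD, fun i => ⟨fun hfe => ?_, fun hinfe => ?_⟩⟩
    · refine ⟨(feas_iff ha hh hq hqb hlt hfe _).2 (hsLU i), ?_⟩
      intro x hx
      rw [feas_iff ha hh hq hqb hlt hfe] at hx
      set c := cOf sbar i with hcdef
      have hc0 : 0 ≤ c := cOf_nonneg (fun j => (hmemD j).1) i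
      have hTc : T = c + sbar i := by rw [← hsum]; exact sum_eq_cOf sbar i
      have hc_eq : c = T - sbar i := by linarith
      have hcaM : c + a i ≤ M := le_trans (cOf_le (fun j => (hmemD j).2) i) hM
      have hxa : x ≤ a i := hx.2.trans (hLb i).2.2.1
      have hx0 : 0 ≤ x := (hLb i).1.trans hx.1
      have hQanti := Q_anti hf hM0' hc0
      rw [obj_self_eq hf hM0' hM hmemD i h, obj_eq hf hM0' hM hmemD i hx0 hxa h, ← hcdef]
      have hsi0 : 0 ≤ sbar i := (hmemD i).1
      rcases le_total x (sbar i) with hxs | hsx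
      · rcases eq_or_lt_of_le (hsLU i).1 with hEq | hLs
        · have hxe : x = sbar i := le_antisymm hxs (hEq ▸ hx.1)
          rw [hxe]
        · have hsB : sbar i ≤ BB M f r T := by
            rcases max_choice (L i) (BB M f r T) with hmc | hmc
            · exfalso
              have : sbar i ≤ L i := le_trans (min_le_right _ _) (le_of_eq hmc)
              linarith
            · exact le_trans (min_le_right _ _) (le_of_eq hmc)
          have hQT : 1 ≤ QQ M f r (T - sbar i) T :=
            (foc_left_iff hf hM0' hr hT0 hTM).2 hsB
          rw [← hc_eq] at hQT
          have hanti : AntitoneOn (hfun M f r c) (Icc x (sbar i)) := by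
            apply hfun_antiOn hf hM0' hc0 hx0 (by linarith)
            intro t h1 h2
            have ht0 : 0 < t := lt_of_le_of_lt (by linarith) h1
            have htT : t ≤ T := by linarith
            have htM : t ≤ M := htT.trans hTM
            have := hQanti ⟨ht0, htM⟩ ⟨hT0, hTM⟩ htT
            calc (1:ℝ) ≤ QQ M f r c T := hQT
              _ ≤ (1+r) * (f t + c * (AA M f t / t)) := by
                  rw [QQ]
                  apply mul_le_mul_of_nonneg_left this h1r.le
          linarith [hanti ⟨le_rfl, hxs⟩ ⟨hxs, le_rfl⟩ hxs]
      · rcases eq_or_lt_of_le (hsLU i).2 with hEq | hsU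
        · have hxe : x = sbar i := le_antisymm (hEq ▸ hx.2) hsx
          rw [hxe]
        · have hBs : BB M f r T ≤ sbar i := by
            rcases min_choice (U i) (max (L i) (BB M f r T)) with hmc | hmc
            · exfalso
              rw [hsdef] at hsU
              simp only at hsU
              rw [hmc] at hsU
              exact lt_irrefl _ hsU
            · calc BB M f r T ≤ max (L i) (BB M f r T) := le_max_right _ _
                _ = sbar i := hmc.symm
          have hQT : QQ M f r (T - sbar i) T ≤ 1 :=
            (foc_right_iff hf hM0' hr hT0 hTM).2 hBs
          rw [← hc_eq] at hQT
          have hmono : MonotoneOn (hfun M f r c) (Icc (sbar i) x) := by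
            apply hfun_monoOn hf hM0' hc0 hsi0 (by linarith [hx.2, (hLb i).2.2.1])
            intro t h1 h2
            have ht0 : 0 < t := lt_of_le_of_lt (by linarith) h1
            have htM : t ≤ M := by linarith [hx.2.trans (hLb i).2.2.1]
            have hTt : T ≤ t := by linarith
            have := hQanti ⟨hT0, hTM⟩ ⟨ht0, htM⟩ hTt
            calc (1+r) * (f t + c * (AA M f t / t)) ≤ QQ M f r c T := by
                  rw [QQ]
                  apply mul_le_mul_of_nonneg_left this h1r.le
              _ ≤ 1 := hQT
          linarith [hmono ⟨le_rfl, hsx⟩ ⟨hsx, le_rfl⟩ hsx]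
    · have hLe : L i = a i := by rw [hLdef, LL, if_neg (not_le.2 hinfe)]
      have hUe : U i = a i := by rw [hUdef, UU, if_neg (not_le.2 hinfe)]
      rw [hsdef]
      simp only
      rw [hLe, hUe]
      exact min_eq_left (le_max_left _ _)

lemma eq_of_sum_le (hf : Assumption2 M f) (hM : ∑ j, a j ≤ M)
    (ha : ∀ i, 0 < a i) (hh : ∀ i, 0 < h i) (hr : 0 ≤ r)
    (hq : q ∈ Set.Ioc (0:ℝ) 1) (hqb : ∀ i, qb i ∈ Set.Ioc (0:ℝ) 1) (hlt : ∀ i, q < qb i)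
    {s s' : Fin n → ℝ}
    (hms : memD n a s) (hNs : NashP2 n a h r q qb (vwap n f) s)
    (hms' : memD n a s') (hNs' : NashP2 n a h r q qb (vwap n f) s')
    (hle : ∑ j, s j ≤ ∑ j, s' j) : s = s' := by
  have hM0' : 0 ≤ M := le_trans (Finset.sum_nonneg fun i _ => (ha i).le) hM
  have h1r : (0:ℝ) < 1 + r := by linarith
  have hLb := fun i => LU_bounds ha hh hq hqb hlt i
  set T := ∑ j, s j with hTdef
  set T' := ∑ j, s' j with hT'def
  have hbnd : ∀ (u : Fin n → ℝ), memD n a u → NashP2 n a h r q qb (vwap n f) u →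
      ∀ i, u i ∈ Icc (LL a h q qb i) (UU a h qb i) := by
    intro u hmu hNu i
    by_cases hfe : h i ≤ a i * qb i
    · exact (feas_iff ha hh hq hqb hlt hfe _).1 ((hNu i).1 hfe).1
    · have he := (hNu i).2 (not_le.1 hfe)
      rw [LL, UU, if_neg hfe, if_neg hfe, he]
      exact ⟨le_rfl, le_rfl⟩
  have hLUs := hbnd s hms hNs
  have hLUs' := hbnd s' hms' hNs'
  have hs0 : ∀ i, 0 ≤ s i := fun i => (hLb i).1.trans (hLUs i).1
  have hs'0 : ∀ i, 0 ≤ s' i := fun i => (hLb i).1.trans (hLUs' i).1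
  have hT0 : 0 ≤ T := Finset.sum_nonneg fun i _ => hs0 i
  have hTM : T ≤ M := le_trans (Finset.sum_le_sum fun i _ => (hms i).2) hM
  have hT'M : T' ≤ M := le_trans (Finset.sum_le_sum fun i _ => (hms' i).2) hM
  have hsiT : ∀ i, s i ≤ T := fun i =>
    Finset.single_le_sum (fun j _ => hs0 j) (Finset.mem_univ i)
  have hsiT' : ∀ i, s' i ≤ T' := fun i =>
    Finset.single_le_sum (fun j _ => hs'0 j) (Finset.mem_univ i)
  have hfe_of_ne : ∀ i, s i ≠ s' i → h i ≤ a i * qb i := by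
    intro i hne
    by_contra hfe
    have h1 := (hNs i).2 (not_le.1 hfe)
    have h2 := (hNs' i).2 (not_le.1 hfe)
    exact hne (h1.trans h2.symm)
  -- Step 1 : componentwise comparison
  have step1 : ∀ j, s j ≤ s' j := by
    by_contra hcon
    push_neg at hcon
    obtain ⟨j, hj⟩ := hcon
    have hTpos : 0 < T := lt_of_lt_of_le (lt_of_le_of_lt (hs'0 j) hj) (hsiT j)
    have hT'pos : 0 < T' := lt_of_lt_of_le hTpos hle
    have hfej : h j ≤ a j * qb j := hfe_of_ne j (ne_of_gt hj)
    obtain ⟨i, hi⟩ : ∃ i, s i < s' i := by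
      by_contra hc
      push_neg at hc
      have hlt' : T' < T := Finset.sum_lt_sum (fun k _ => hc k) ⟨j, Finset.mem_univ j, hj⟩
      linarith
    have hfei : h i ≤ a i * qb i := hfe_of_ne i (ne_of_lt hi)
    have n1 := necR hf hM0' hM ha hh hr hq hqb hlt hms hNs hfei
      (lt_of_lt_of_le hi (hLUs' i).2) hTpos
    have n2 := necL hf hM0' hM ha hh hr hq hqb hlt hms' hNs' hfei
      (lt_of_le_of_lt (hLUs i).1 hi)
    have n3 := necL hf hM0' hM ha hh hr hq hqb hlt hms hNs hfej
      (lt_of_le_of_lt (hLUs' j).1 hj)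
    have n4 := necR hf hM0' hM ha hh hr hq hqb hlt hms' hNs' hfej
      (lt_of_lt_of_le hj (hLUs j).2) hT'pos
    have hci : cOf s i = T - s i := by have := sum_eq_cOf s i; linarith
    have hcj : cOf s j = T - s j := by have := sum_eq_cOf s j; linarith
    have hci' : cOf s' i = T' - s' i := by have := sum_eq_cOf s' i; linarith
    have hcj' : cOf s' j = T' - s' j := by have := sum_eq_cOf s' j; linarith
    rw [hci, ← hTdef, QQ_share (ne_of_gt hTpos)] at n1
    rw [hcj, ← hTdef, QQ_share (ne_of_gt hTpos)] at n3
    rw [hci', ← hT'def, QQ_share (ne_of_gt hT'pos)] at n2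
    rw [hcj', ← hT'def, QQ_share (ne_of_gt hT'pos)] at n4
    have hA : 0 < AA M f T := AA_pos hf hM0' hTpos hTM
    have hA' : 0 < AA M f T' := AA_pos hf hM0' hT'pos hT'M
    have hXY : PP M f T - s i / T * AA M f T ≤ PP M f T - s j / T * AA M f T :=
      le_of_mul_le_mul_left (by linarith) h1r
    have hXY' : PP M f T' - s' j / T' * AA M f T' ≤ PP M f T' - s' i / T' * AA M f T' :=
      le_of_mul_le_mul_left (by linarith) h1r
    have hji : s j ≤ s i := by
      have h5 : s j / T * AA M f T ≤ s i / T * AA M f T := by linarith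
      have h6 : s j / T ≤ s i / T := le_of_mul_le_mul_right h5 hA
      exact (div_le_div_iff_of_pos_right hTpos).1 h6
    have hij' : s' i ≤ s' j := by
      have h5 : s' i / T' * AA M f T' ≤ s' j / T' * AA M f T' := by linarith
      have h6 : s' i / T' ≤ s' j / T' := le_of_mul_le_mul_right h5 hA'
      exact (div_le_div_iff_of_pos_right hT'pos).1 h6
    linarith
  -- totals equal or strictly smaller
  rcases eq_or_lt_of_le hle with hTeq | hTlt
  · funext i
    by_contra hne
    have hlt' := lt_of_le_of_ne (step1 i) hne
    have := Finset.sum_lt_sum (fun j _ => step1 j) ⟨i, Finset.mem_univ i, hlt'⟩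
    rw [← hTdef, ← hT'def] at this
    linarith
  · exfalso
    have hT'pos : 0 < T' := lt_of_le_of_lt hT0 hTlt
    rcases eq_or_lt_of_le hT0 with hT0eq | hTpos
    · -- T = 0 : everybody liquidates 0 in s, but some bank strictly gains by liquidating
      have hz : ∀ j, s j = 0 := by
        intro j
        have := (Finset.sum_eq_zero_iff_of_nonneg (fun k _ => hs0 k)).1 hT0eq.symm
        exact this j (Finset.mem_univ j)
      obtain ⟨i, hi⟩ : ∃ i, 0 < s' i := by
        by_contra hc
        push_neg at hc
        have : T' ≤ 0 := Finset.sum_nonpos fun k _ => hc k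
        linarith
      have hfei : h i ≤ a i * qb i := hfe_of_ne i (by rw [hz i]; exact ne_of_lt hi)
      have hLi0 : LL a h q qb i = 0 := by
        have h1 := (hLUs i).1
        rw [hz i] at h1
        exact le_antisymm h1 (hLb i).1
      have n2 := necL hf hM0' hM ha hh hr hq hqb hlt hms' hNs' hfei
        (by rw [hLi0]; exact hi)
      have hci' : cOf s' i = T' - s' i := by have := sum_eq_cOf s' i; linarith
      rw [hci', ← hT'def, QQ_share (ne_of_gt hT'pos)] at n2
      have hA' : 0 < AA M f T' := AA_pos hf hM0' hT'pos hT'M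
      have hσ' : 0 < s' i / T' := div_pos hi hT'pos
      have hPT' : 1 < (1+r) * PP M f T' := by nlinarith [mul_pos h1r (mul_pos hσ' hA')]
      set x := min (UU a h qb i) T' with hxdef
      have hx0 : 0 < x := lt_min (hLb i).2.2.2 hT'pos
      have hxU : x ≤ UU a h qb i := min_le_left _ _
      have hxT' : x ≤ T' := min_le_right _ _
      have hxM : x ≤ M := hxT'.trans hT'M
      have hxa : x ≤ a i := hxU.trans (hLb i).2.2.1
      have hopt := ((hNs i).1 hfei).2 x
        ((feas_iff ha hh hq hqb hlt hfei _).2 ⟨by rw [hLi0]; exact hx0.le, hxU⟩)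
      have hc0 : cOf s i = 0 := by have := sum_eq_cOf s i; rw [hz i] at this; linarith
      rw [obj_self_eq hf hM0' hM hms i h, obj_eq hf hM0' hM hms i hx0.le hxa h, hc0] at hopt
      rw [hfun_zero_c] at hopt
      simp only at hopt
      rw [hz i, FF_zero] at hopt
      -- hopt : 0 - (1+r) * 0 + r * h i ≤ x - (1+r) * FF M f x + r * h i
      have hFx : FF M f x = PP M f x * x := by
        rw [PP, div_mul_cancel₀ _ (ne_of_gt hx0)]
      have hPge : PP M f T' ≤ PP M f x := PP_anti_le hf hM0' hx0 hxT' hT'M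
      have hP2 : 1 < (1+r) * PP M f x := by
        nlinarith [mul_le_mul_of_nonneg_left hPge h1r.le]
      nlinarith [mul_lt_mul_of_pos_right hP2 hx0]
    · -- 0 < T < T' : the share argument
      have hσsum : ∑ i, s i / T = 1 := by
        rw [← Finset.sum_div, ← hTdef, div_self (ne_of_gt hTpos)]
      have hσ'sum : ∑ i, s' i / T' = 1 := by
        rw [← Finset.sum_div, ← hT'def, div_self (ne_of_gt hT'pos)]
      obtain ⟨i, hσ'pos, hσle⟩ : ∃ i, 0 < s' i / T' ∧ s i / T ≤ s' i / T' := by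
        by_contra hc
        push_neg at hc
        have hexp : ∃ i, 0 < s' i / T' := by
          by_contra hc2
          push_neg at hc2
          have : (∑ i, s' i / T') ≤ 0 := Finset.sum_nonpos fun k _ => hc2 k
          linarith
        obtain ⟨k, hk⟩ := hexp
        have hlt' : (∑ i, s' i / T') < ∑ i, s i / T := by
          apply Finset.sum_lt_sum
          · intro m _
            rcases le_or_gt (s' m / T') 0 with hm | hm
            · exact hm.trans (div_nonneg (hs0 m) hTpos.le)
            · exact (hc m hm).le
          · exact ⟨k, Finset.mem_univ k, hc k hk⟩
        rw [hσsum, hσ'sum] at hlt'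
        linarith
      have hsi_lt : s i < s' i := by
        have e1 : s i / T * T = s i := div_mul_cancel₀ _ (ne_of_gt hTpos)
        have e2 : s' i / T' * T' = s' i := div_mul_cancel₀ _ (ne_of_gt hT'pos)
        nlinarith [mul_le_mul_of_nonneg_right hσle hTpos.le,
          mul_lt_mul_of_pos_left hTlt hσ'pos]
      have hfei : h i ≤ a i * qb i := hfe_of_ne i (ne_of_lt hsi_lt)
      have n1 := necR hf hM0' hM ha hh hr hq hqb hlt hms hNs hfei
        (lt_of_lt_of_le hsi_lt (hLUs' i).2) hTpos
      have n2 := necL hf hM0' hM ha hh hr hq hqb hlt hms' hNs' hfei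
        (lt_of_le_of_lt (hLUs i).1 hsi_lt)
      have hci : cOf s i = T - s i := by have := sum_eq_cOf s i; linarith
      have hci' : cOf s' i = T' - s' i := by have := sum_eq_cOf s' i; linarith
      rw [hci, ← hTdef, QQ_share (ne_of_gt hTpos)] at n1
      rw [hci', ← hT'def, QQ_share (ne_of_gt hT'pos)] at n2
      have hA : 0 < AA M f T := AA_pos hf hM0' hTpos hTM
      have hA' : 0 < AA M f T' := AA_pos hf hM0' hT'pos hT'M
      have hPlt : PP M f T' < PP M f T := PP_anti hf hM0' hTpos hTlt hT'M
      have hflt : f T' < f T := hf.anti ⟨hTpos.le, hTM⟩ ⟨hT'pos.le, hT'M⟩ hTlt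
      set σ := s i / T with hσdef
      set σ' := s' i / T' with hσ'def
      have hσ0 : 0 ≤ σ := div_nonneg (hs0 i) hTpos.le
      have hσ1 : σ ≤ 1 := by
        rw [hσdef, div_le_one hTpos]
        exact hsiT i
      -- chain of inequalities
      have hstep1 : PP M f T' - σ' * AA M f T' ≤ PP M f T' - σ * AA M f T' := by
        linarith [mul_le_mul_of_nonneg_right hσle hA'.le]
      have hAT : AA M f T = PP M f T - f T := rfl
      have hAT' : AA M f T' = PP M f T' - f T' := rfl
      have hstep2 : PP M f T' - σ * AA M f T' < PP M f T - σ * AA M f T := by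
        rw [hAT, hAT']
        rcases eq_or_lt_of_le hσ1 with hs1 | hs1
        · rw [hs1]
          linarith [hflt]
        · have h9 : σ * f T' ≤ σ * f T := mul_le_mul_of_nonneg_left hflt.le hσ0
          have h10 : (1 - σ) * PP M f T' < (1 - σ) * PP M f T :=
            mul_lt_mul_of_pos_left hPlt (by linarith)
          linarith [h9, h10]
      have hfinal : (1+r) * (PP M f T' - σ' * AA M f T')
          < (1+r) * (PP M f T - σ * AA M f T) := by
        apply mul_lt_mul_of_pos_left _ h1r
        exact lt_of_le_of_lt hstep1 hstep2
      linarith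

end Main

end FireSale

/-- under VWAP pricing and Assumption 2, for every fixed price vector
`(q, q̄) ∈ Q̂` there exists a unique Nash equilibrium liquidation vector in `D`. -/
theorem vwap_unique_equilibrium_at_fixed_prices
    (n : ℕ) (a h : Fin n → ℝ) (r M : ℝ) (f : ℝ → ℝ)
    (ha : ∀ i, 0 < a i) (hh : ∀ i, 0 < h i) (hr : 0 ≤ r)
    (hM : ∑ i, a i ≤ M)
    (hf : Assumption2 M f)
    (q : ℝ) (qb : Fin n → ℝ)
    (hq : q ∈ Set.Ioc (0 : ℝ) 1) (hqb : ∀ i, qb i ∈ Set.Ioc (0 : ℝ) 1)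
    (hlt : ∀ i, q < qb i) :
    ∃! s : Fin n → ℝ, memD n a s ∧ NashP2 n a h r q qb (vwap n f) s := by
  rcases Nat.eq_zero_or_pos n with hn | hn
  · subst hn
    exact ⟨fun i => i.elim0, ⟨fun i => i.elim0, fun i => i.elim0⟩,
      fun y _ => funext fun i => i.elim0⟩
  · have hne : n ≠ 0 := Nat.pos_iff_ne_zero.1 hn
    obtain ⟨s₀, hm₀, hN₀⟩ := FireSale.exists_equilibrium hf hM ha hh hr hq hqb hlt hne
    refine ⟨s₀, ⟨hm₀, hN₀⟩, ?_⟩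
    rintro y ⟨hmy, hNy⟩
    rcases le_total (∑ j, y j) (∑ j, s₀ j) with hle | hle
    · exact FireSale.eq_of_sum_le hf hM ha hh hr hq hqb hlt hmy hNy hm₀ hN₀ hle
    · exact (FireSale.eq_of_sum_le hf hM ha hh hr hq hqb hlt hm₀ hN₀ hmy hNy hle).symm
end
end

section
/- Under the VWAP pricing structure, Assumption 2, and Assumptions 1(3)-1(4) on the haircut function g, the set of clearing price vectors (clearing haircut and clearing prices) is nonempty and possesses a greatest and a least element: there exist clearing price vectors (q↑, q̄_1↑,...,q̄_n↑) and (q↓, q̄_1↓,...,q̄_n↓) such that every clearing price vector (q, q̄_1,...,q̄_n) satisfies q↓ ≤ q ≤ q↑ and q̄_i↓ ≤ q̄_i ≤ q̄_i↑ for all i. -/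
noncomputable section

/-- `(q, q̄)` is a clearing price vector under VWAP pricing: some Nash equilibrium `s` of
(P2) at these prices reproduces them, `q = g(∑ sᵢ)` and `q̄ᵢ = f̄ᵢ(s)`. -/
def ClearingVWAP (n : ℕ) (a h : Fin n → ℝ) (r : ℝ) (f g : ℝ → ℝ)
    (q : ℝ) (qb : Fin n → ℝ) : Prop :=
  ∃ s : Fin n → ℝ, memD n a s ∧ NashP2 n a h r q qb (vwap n f) s ∧
    q = g (∑ i, s i) ∧ ∀ i, qb i = vwap n f i s

/- ===== Auxiliary development ===== -/
open Set MeasureTheory intervalIntegral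

section Aux

variable {f : ℝ → ℝ} {M : ℝ}

/-- primitive of the order book density -/
def Fint (f : ℝ → ℝ) (t : ℝ) : ℝ := ∫ σ in (0:ℝ)..t, f σ

/-- VWAP as a function of total volume -/
def Vv (f : ℝ → ℝ) (t : ℝ) : ℝ := if t = 0 then 1 else Fint f t / t

/-- marginal revenue function -/
def Wfun (f : ℝ → ℝ) (c y : ℝ) : ℝ := (c * Vv f (c + y) + y * f (c + y)) / (c + y)

/-- hypotheses on the density used in the analytic lemmas -/
structure FH (f : ℝ → ℝ) (M : ℝ) : Prop where
  cont : ContinuousOn f (Icc 0 M)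
  anti : StrictAntiOn f (Icc 0 M)
  pos : ∀ x ∈ Icc (0:ℝ) M, 0 < f x
  le_one : ∀ x ∈ Icc (0:ℝ) M, f x ≤ 1
  f0 : f 0 = 1

namespace FH

theorem integrable (hf : FH f M) {t1 t2 : ℝ} (h1 : 0 ≤ t1) (h12 : t1 ≤ t2) (h2 : t2 ≤ M) :
    IntervalIntegrable f MeasureTheory.volume t1 t2 := by
  apply ContinuousOn.intervalIntegrable
  apply hf.cont.mono
  rw [uIcc_of_le h12]
  exact Icc_subset_Icc h1 h2

theorem integral_le (hf : FH f M) {t1 t2 : ℝ} (h1 : 0 ≤ t1) (h12 : t1 ≤ t2) (h2 : t2 ≤ M) :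
    Fint f t2 - Fint f t1 ≤ (t2 - t1) * f t1 := by
  have key : (∫ σ in t1..t2, f σ) ≤ (t2 - t1) * f t1 := by
    have := intervalIntegral.integral_mono_on h12 (hf.integrable h1 h12 h2)
      (_root_.intervalIntegrable_const (c := f t1))
      (fun x hx => hf.anti.antitoneOn ⟨h1, h12.trans h2⟩
        ⟨h1.trans hx.1, hx.2.trans h2⟩ hx.1)
    simpa using this
  have split : Fint f t2 - Fint f t1 = ∫ σ in t1..t2, f σ := by
    rw [Fint, Fint, ← intervalIntegral.integral_add_adjacent_intervals
      (hf.integrable le_rfl h1 (h12.trans h2)) (hf.integrable h1 h12 h2)]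
    ring
  linarith [key, split.le, split.ge]

theorem integral_ge (hf : FH f M) {t1 t2 : ℝ} (h1 : 0 ≤ t1) (h12 : t1 ≤ t2) (h2 : t2 ≤ M) :
    (t2 - t1) * f t2 ≤ Fint f t2 - Fint f t1 := by
  have key : (t2 - t1) * f t2 ≤ (∫ σ in t1..t2, f σ) := by
    have := intervalIntegral.integral_mono_on h12
      (_root_.intervalIntegrable_const (c := f t2)) (hf.integrable h1 h12 h2)
      (fun x hx => hf.anti.antitoneOn ⟨h1.trans hx.1, hx.2.trans h2⟩
        ⟨h1.trans h12, h2⟩ hx.2)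
    simpa using this
  have split : Fint f t2 - Fint f t1 = ∫ σ in t1..t2, f σ := by
    rw [Fint, Fint, ← intervalIntegral.integral_add_adjacent_intervals
      (hf.integrable le_rfl h1 (h12.trans h2)) (hf.integrable h1 h12 h2)]
    ring
  linarith

theorem F_zero : Fint f 0 = 0 := by simp [Fint]

theorem F_le (hf : FH f M) {t : ℝ} (h1 : 0 ≤ t) (h2 : t ≤ M) : Fint f t ≤ t := by
  have := hf.integral_le le_rfl h1 h2
  simpa [F_zero, hf.f0] using this

theorem F_ge (hf : FH f M) {t : ℝ} (h1 : 0 ≤ t) (h2 : t ≤ M) : t * f t ≤ Fint f t := by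
  have := hf.integral_ge le_rfl h1 h2
  simpa [F_zero] using this

theorem V_zero : Vv f 0 = 1 := by simp [Vv]

theorem V_of_ne {t : ℝ} (ht : t ≠ 0) : Vv f t = Fint f t / t := by simp [Vv, ht]

theorem V_le_one (hf : FH f M) {t : ℝ} (h1 : 0 ≤ t) (h2 : t ≤ M) : Vv f t ≤ 1 := by
  rcases eq_or_lt_of_le h1 with h|h
  · simp [Vv, ← h]
  · rw [V_of_ne h.ne']
    rw [div_le_one h]
    exact hf.F_le h1 h2

theorem f_le_V (hf : FH f M) {t : ℝ} (h1 : 0 < t) (h2 : t ≤ M) : f t ≤ Vv f t := by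
  rw [V_of_ne h1.ne', le_div_iff₀ h1]
  have := hf.F_ge h1.le h2
  linarith

theorem f_lt_V (hf : FH f M) {t : ℝ} (h1 : 0 < t) (h2 : t ≤ M) : f t < Vv f t := by
  have hhalf : (0:ℝ) < t/2 := by linarith
  have k1 : Fint f t - Fint f (t/2) ≥ (t - t/2) * f t := hf.integral_ge hhalf.le (by linarith) h2
  have k2 : Fint f (t/2) ≥ (t/2) * f (t/2) := by
    have := hf.F_ge (t := t/2) hhalf.le (by linarith)
    linarith
  have k3 : f t < f (t/2) := hf.anti ⟨hhalf.le, by linarith⟩ ⟨h1.le, h2⟩ (by linarith)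
  rw [V_of_ne h1.ne', lt_div_iff₀ h1]
  nlinarith

theorem V_pos (hf : FH f M) {t : ℝ} (h1 : 0 ≤ t) (h2 : t ≤ M) : 0 < Vv f t := by
  rcases eq_or_lt_of_le h1 with h|h
  · simp [Vv, ← h]
  · exact lt_of_le_of_lt (le_of_lt (hf.pos t ⟨h1, h2⟩)) (hf.f_lt_V h h2)

theorem V_lt_one (hf : FH f M) {t : ℝ} (h1 : 0 < t) (h2 : t ≤ M) : Vv f t < 1 := by
  have hhalf : (0:ℝ) < t/2 := by linarith
  have k1 : Fint f t - Fint f (t/2) ≤ (t - t/2) * f (t/2) :=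
    hf.integral_le hhalf.le (by linarith) h2
  have k2 : Fint f (t/2) - Fint f 0 ≤ (t/2 - 0) * f 0 := hf.integral_le le_rfl hhalf.le (by linarith)
  have k3 : f (t/2) < 1 := by
    rw [← hf.f0]
    exact hf.anti ⟨le_rfl, by linarith⟩ ⟨hhalf.le, by linarith⟩ hhalf
  rw [V_of_ne h1.ne', div_lt_one h1]
  rw [F_zero, hf.f0] at k2
  nlinarith

theorem V_anti (hf : FH f M) : AntitoneOn (Vv f) (Icc 0 M) := by
  intro t1 ht1 t2 ht2 h12
  rcases eq_or_lt_of_le ht1.1 with h|h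
  · rw [← h, V_zero]
    exact hf.V_le_one ht2.1 ht2.2
  · have h2pos : 0 < t2 := lt_of_lt_of_le h h12
    rw [V_of_ne h.ne', V_of_ne h2pos.ne', div_le_div_iff₀ h2pos h]
    have k1 : Fint f t2 - Fint f t1 ≤ (t2 - t1) * f t1 := hf.integral_le h.le h12 ht2.2
    have k2 : t1 * f t1 ≤ Fint f t1 := hf.F_ge h.le ht1.2
    nlinarith

theorem F_lip (hf : FH f M) : LipschitzOnWith 1 (Fint f) (Icc 0 M) := by
  apply LipschitzOnWith.of_dist_le_mul
  intro x hx y hy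
  rw [Real.dist_eq, Real.dist_eq]
  wlog hxy : y ≤ x generalizing x y with HW
  · rw [abs_sub_comm, abs_sub_comm x y]
    exact HW y hy x hx (by linarith [not_le.mp hxy])
  have k1 := hf.integral_le hy.1 hxy hx.2
  have k2 := hf.integral_ge hy.1 hxy hx.2
  have k3 : f x > 0 := hf.pos x hx
  have k4 : f y ≤ 1 := hf.le_one y hy
  rw [abs_of_nonneg (by nlinarith), abs_of_nonneg (by linarith)]
  push_cast
  nlinarith

theorem V_cont (hf : FH f M) : ContinuousOn (Vv f) (Icc 0 M) := by
  have hFc : ContinuousOn (Fint f) (Icc 0 M) := (hf.F_lip).continuousOn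
  intro t ht
  rcases eq_or_lt_of_le ht.1 with h|h
  · rw [← h]
    have hM0 : (0:ℝ) ≤ M := by
      have := ht.2; linarith [ht.1]
    have hb : ∀ x ∈ Icc (0:ℝ) M, f x ≤ Vv f x ∧ Vv f x ≤ 1 := by
      intro x hx
      rcases eq_or_lt_of_le hx.1 with h0|h0
      · simp [Vv, ← h0, hf.f0]
      · exact ⟨hf.f_le_V h0 hx.2, hf.V_le_one hx.1 hx.2⟩
    have hft : Filter.Tendsto f (nhdsWithin 0 (Icc 0 M)) (nhds 1) := by
      have hc := hf.cont 0 ⟨le_rfl, hM0⟩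
      rw [ContinuousWithinAt, hf.f0] at hc
      exact hc
    unfold ContinuousWithinAt
    rw [V_zero]
    apply tendsto_of_tendsto_of_tendsto_of_le_of_le' hft tendsto_const_nhds
    · exact Filter.eventually_of_mem self_mem_nhdsWithin (fun x hx => (hb x hx).1)
    · exact Filter.eventually_of_mem self_mem_nhdsWithin (fun x hx => (hb x hx).2)
  · have : ContinuousWithinAt (fun u => Fint f u / u) (Icc 0 M) t :=
      (hFc t ht).div continuousWithinAt_id h.ne'
    apply this.congr_of_eventuallyEq
    · filter_upwards [inter_mem_nhdsWithin (Icc 0 M) (IsOpen.mem_nhds isOpen_ne h.ne')]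
        with x hx
      exact V_of_ne hx.2
    · exact V_of_ne h.ne'

theorem hasDerivAt_F (hf : FH f M) {t : ℝ} (h1 : 0 < t) (h2 : t < M) :
    HasDerivAt (Fint f) (f t) t := by
  have hct : ∀ x ∈ Ioo 0 M, ContinuousAt f x := fun x hx =>
    hf.cont.continuousAt (Icc_mem_nhds hx.1 hx.2)
  exact intervalIntegral.integral_hasDerivAt_right
    (hf.integrable le_rfl h1.le h2.le)
    (ContinuousAt.stronglyMeasurableAtFilter isOpen_Ioo hct t ⟨h1, h2⟩)
    (hct t ⟨h1, h2⟩)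

theorem hasDerivAt_psi (hf : FH f M) {c y : ℝ} (hy : 0 < c + y) (hM : c + y < M) :
    HasDerivAt (fun z => z * Vv f (c + z)) (Wfun f c y) y := by
  set S := c + y with hS
  have hden : HasDerivAt (fun z : ℝ => c + z) 1 y := by
    simpa using (hasDerivAt_id y).const_add c
  have hF : HasDerivAt (fun z => Fint f (c + z)) (f S) y := by
    have := (hf.hasDerivAt_F hy hM).comp y hden
    rw [mul_one] at this
    exact this
  have hnum : HasDerivAt (fun z => z * Fint f (c + z)) (Fint f S + y * f S) y := by
    have := (hasDerivAt_id y).mul hF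
    rw [one_mul] at this
    exact this
  have hq : HasDerivAt (fun z => z * Fint f (c + z) / (c + z))
      (((Fint f S + y * f S) * S - y * Fint f S * 1) / S ^ 2) y := hnum.div hden hy.ne'
  have heq : (fun z => z * Vv f (c + z)) =ᶠ[nhds y] (fun z => z * Fint f (c + z) / (c + z)) := by
    have : ∀ᶠ z in nhds y, 0 < c + z := by
      have hcont : ContinuousAt (fun z : ℝ => c + z) y := by fun_prop
      exact hcont.eventually (eventually_gt_nhds hy)
    filter_upwards [this] with z hz
    rw [V_of_ne hz.ne', mul_div_assoc]
  have hval : ((Fint f S + y * f S) * S - y * Fint f S * 1) / S ^ 2 = Wfun f c y := by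
    rw [Wfun, ← hS, V_of_ne hy.ne']
    field_simp
    ring
  rw [← hval]
  exact hq.congr_of_eventuallyEq heq

theorem W_anti (hf : FH f M) {c x1 x2 : ℝ} (hc : 0 ≤ c) (hx1 : 0 ≤ x1) (h12 : x1 ≤ x2)
    (hS1 : 0 < c + x1) (hS2 : c + x2 ≤ M) : Wfun f c x2 ≤ Wfun f c x1 := by
  have hS2' : 0 < c + x2 := by linarith
  have hm1 : c + x1 ∈ Icc (0:ℝ) M := ⟨hS1.le, by linarith⟩
  have hm2 : c + x2 ∈ Icc (0:ℝ) M := ⟨hS2'.le, hS2⟩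
  have hfa : f (c + x2) ≤ f (c + x1) := hf.anti.antitoneOn hm1 hm2 (by linarith)
  have hVa : Vv f (c + x2) ≤ Vv f (c + x1) := hf.V_anti hm1 hm2 (by linarith)
  have hfV : f (c + x1) ≤ Vv f (c + x1) := hf.f_le_V hS1 hm1.2
  have hfp : 0 < f (c + x2) := hf.pos _ hm2
  rw [Wfun, Wfun, div_le_div_iff₀ hS2' hS1]
  have hx2 : 0 ≤ x2 := hx1.trans h12
  have e1 : c * Vv f (c + x2) + x2 * f (c + x2) ≤ c * Vv f (c + x1) + x2 * f (c + x1) := by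
    nlinarith [mul_nonneg hc (sub_nonneg.2 hVa), mul_nonneg hx2 (sub_nonneg.2 hfa)]
  have e2 : (c * Vv f (c + x1) + x2 * f (c + x1)) * (c + x1)
      ≤ (c * Vv f (c + x1) + x1 * f (c + x1)) * (c + x2) := by
    nlinarith [mul_nonneg (mul_nonneg hc (sub_nonneg.2 hfV)) (sub_nonneg.2 h12)]
  nlinarith [mul_le_mul_of_nonneg_right e1 hS1.le]

theorem psi_contOn (hf : FH f M) {c α β : ℝ} (hc : 0 ≤ c) (hα : 0 ≤ α) (hM : c + β ≤ M) :
    ContinuousOn (fun y => y * Vv f (c + y)) (Icc α β) := by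
  apply ContinuousOn.mul (continuousOn_id' _)
  apply hf.V_cont.comp (by fun_prop : ContinuousOn (fun y : ℝ => c + y) (Icc α β))
  intro y hy
  simp only [mem_Icc]
  exact ⟨by linarith [hy.1], by linarith [hy.2]⟩

theorem Phi_hasDeriv (hf : FH f M) {c rr hi y : ℝ} (hy : 0 < c + y) (hM : c + y < M) :
    HasDerivAt (fun z => z + rr * hi - (1 + rr) * (z * Vv f (c + z)))
      (1 - (1 + rr) * Wfun f c y) y := by
  have h1 : HasDerivAt (fun z : ℝ => z + rr * hi) 1 y := (hasDerivAt_id y).add_const _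
  have h2 := (hf.hasDerivAt_psi hy hM).const_mul (1 + rr)
  exact h1.sub h2

theorem Phi_mono (hf : FH f M) {c α β rr : ℝ} (hi : ℝ) (hr : 0 ≤ rr) (hc : 0 ≤ c)
    (hα : 0 ≤ α) (hS : 0 < c + α) (hM : c + β ≤ M)
    (hTheta : 0 ≤ 1 - (1 + rr) * Wfun f c α) :
    MonotoneOn (fun y => y + rr * hi - (1 + rr) * (y * Vv f (c + y))) (Icc α β) := by
  apply monotoneOn_of_deriv_nonneg (convex_Icc α β)
  · apply ContinuousOn.sub (by fun_prop)
    exact (hf.psi_contOn hc hα hM).const_smul (1 + rr) |>.congr (fun y hy => by simp [smul_eq_mul])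
  · intro y hy
    rw [interior_Icc] at hy
    exact (hf.Phi_hasDeriv (by linarith [hy.1]) (by linarith [hy.2])).differentiableAt.differentiableWithinAt
  · intro y hy
    rw [interior_Icc] at hy
    rw [(hf.Phi_hasDeriv (c := c) (rr := rr) (hi := hi) (by linarith [hy.1]) (by linarith [hy.2])).deriv]
    have hw : Wfun f c y ≤ Wfun f c α := hf.W_anti hc hα hy.1.le hS (by linarith [hy.2])
    nlinarith

theorem Phi_anti (hf : FH f M) {c α β rr : ℝ} (hi : ℝ) (hr : 0 ≤ rr) (hc : 0 ≤ c)
    (hα : 0 ≤ α) (hM : c + β ≤ M)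
    (hTheta : 1 - (1 + rr) * Wfun f c β ≤ 0) :
    AntitoneOn (fun y => y + rr * hi - (1 + rr) * (y * Vv f (c + y))) (Icc α β) := by
  apply antitoneOn_of_deriv_nonpos (convex_Icc α β)
  · apply ContinuousOn.sub (by fun_prop)
    exact (hf.psi_contOn hc hα hM).const_smul (1 + rr) |>.congr (fun y hy => by simp [smul_eq_mul])
  · intro y hy
    rw [interior_Icc] at hy
    have h0 : 0 < c + y := by linarith [hy.1]
    exact (hf.Phi_hasDeriv h0 (by linarith [hy.2])).differentiableAt.differentiableWithinAt
  · intro y hy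
    rw [interior_Icc] at hy
    have h0 : 0 < c + y := by linarith [hy.1]
    rw [(hf.Phi_hasDeriv (c := c) (rr := rr) (hi := hi) h0 (by linarith [hy.2])).deriv]
    have hw : Wfun f c β ≤ Wfun f c y := hf.W_anti hc (by linarith [hy.1] : (0:ℝ) ≤ y) hy.2.le h0 hM
    nlinarith

end FH

/-- per-bank optimality given the sign of the consistent marginal objective -/
theorem bank_opt (hf : FH f M) {r c si ai x : ℝ} (hi : ℝ) (hr : 0 ≤ r) (hc : 0 ≤ c)
    (hsi0 : 0 ≤ si) (hsia : si ≤ ai) (hTpos : 0 < c + si) (hcai : c + ai ≤ M)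
    (hx0 : 0 ≤ x) (hxa : x ≤ ai)
    (hcase : (x ≤ si ∧ 1 - (1 + r) * Wfun f c si ≤ 0) ∨
      (si ≤ x ∧ 0 ≤ 1 - (1 + r) * Wfun f c si)) :
    si + r * hi - (1 + r) * (si * Vv f (c + si)) ≤ x + r * hi - (1 + r) * (x * Vv f (c + x)) := by
  rcases hcase with ⟨hxsi, hTh⟩ | ⟨hsix, hTh⟩
  · have := hf.Phi_anti (c := c) (α := 0) (β := si) hi hr hc le_rfl
      (by linarith) hTh ⟨hx0, hxsi⟩ ⟨hsi0, le_rfl⟩ hxsi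
    simpa using this
  · have := hf.Phi_mono (c := c) (α := si) (β := ai) hi hr hc hsi0 hTpos hcai hTh
      ⟨le_rfl, hsia⟩ ⟨hsix, hxa⟩ hsix
    simpa using this

end Aux

section Main

variable {n : ℕ} {a h : Fin n → ℝ} {r M : ℝ} {f g : ℝ → ℝ}

/-- bundled hypotheses for the clearing construction -/
structure Setup (n : ℕ) (a h : Fin n → ℝ) (r M : ℝ) (f g : ℝ → ℝ) : Prop where
  ha : ∀ i, 0 < a i
  hh : ∀ i, 0 < h i
  hr : 0 ≤ r
  hMA : ∑ i, a i ≤ M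
  hfh : FH f M
  fdiff : DifferentiableWithinAt ℝ f (Icc 0 M) 0
  gmem : ∀ x ∈ Icc (0:ℝ) M, g x ∈ Ioc (0:ℝ) 1
  gcont : ContinuousOn g (Icc 0 M)
  ganti : StrictAntiOn g (Icc 0 M)
  glt : ∀ T ∈ Icc (0:ℝ) (∑ i, a i), g T < Vv f T
  npos : 0 < n

/-- lower feasibility bound -/
def lo (a h : Fin n → ℝ) (f g : ℝ → ℝ) (i : Fin n) (T : ℝ) : ℝ :=
  (h i - a i * g T) / (Vv f T - g T)

/-- upper feasibility bound -/
def up (a h : Fin n → ℝ) (f : ℝ → ℝ) (i : Fin n) (T : ℝ) : ℝ :=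
  min (a i) (h i / Vv f T)

/-- interior candidate -/
def mm (r : ℝ) (f : ℝ → ℝ) (T : ℝ) : ℝ :=
  ((1 + r) * Vv f T - 1) * T / ((1 + r) * (Vv f T - f T))

/-- bank i's selected response at aggregate volume T -/
def xi (a h : Fin n → ℝ) (r : ℝ) (f g : ℝ → ℝ) (i : Fin n) (T : ℝ) : ℝ :=
  if h i ≤ a i * Vv f T then
    max (max 0 (lo a h f g i T)) (min (mm r f T) (up a h f i T)) else a i

/-- marginal objective at a consistent aggregate -/
def Th (r : ℝ) (f : ℝ → ℝ) (T x : ℝ) : ℝ :=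
  1 - (1 + r) * (((T - x) * Vv f T + x * f T) / T)

namespace Setup

theorem Apos (S : Setup n a h r M f g) : 0 < ∑ i, a i := by
  have : Nonempty (Fin n) := Fin.pos_iff_nonempty.mp S.npos
  exact Finset.sum_pos (fun i _ => S.ha i) Finset.univ_nonempty

theorem TinM (S : Setup n a h r M f g) {T : ℝ} (h1 : 0 ≤ T) (h2 : T ≤ ∑ i, a i) :
    T ∈ Icc (0:ℝ) M := ⟨h1, h2.trans S.hMA⟩

theorem gpos (S : Setup n a h r M f g) {T : ℝ} (h1 : 0 ≤ T) (h2 : T ≤ ∑ i, a i) :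
    0 < g T := (S.gmem T (S.TinM h1 h2)).1

theorem Vg_pos (S : Setup n a h r M f g) {T : ℝ} (h1 : 0 ≤ T) (h2 : T ≤ ∑ i, a i) :
    0 < Vv f T - g T := sub_pos.2 (S.glt T ⟨h1, h2⟩)

theorem lo_le_a (S : Setup n a h r M f g) {T : ℝ} {i : Fin n} (h1 : 0 ≤ T) (h2 : T ≤ ∑ i, a i)
    (hu : h i ≤ a i * Vv f T) : lo a h f g i T ≤ a i := by
  rw [lo, div_le_iff₀ (S.Vg_pos h1 h2)]
  nlinarith [S.Vg_pos h1 h2]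

theorem lo_le_up (S : Setup n a h r M f g) {T : ℝ} {i : Fin n} (h1 : 0 ≤ T) (h2 : T ≤ ∑ i, a i)
    (hu : h i ≤ a i * Vv f T) : lo a h f g i T ≤ up a h f i T := by
  have hV : 0 < Vv f T := S.hfh.V_pos h1 (h2.trans S.hMA)
  have hg0 : 0 < g T := S.gpos h1 h2
  apply le_min (S.lo_le_a h1 h2 hu)
  rw [lo, div_le_div_iff₀ (S.Vg_pos h1 h2) hV]
  nlinarith

theorem up_pos (S : Setup n a h r M f g) {T : ℝ} {i : Fin n} (h1 : 0 ≤ T) (h2 : T ≤ ∑ i, a i) :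
    0 < up a h f i T :=
  lt_min (S.ha i) (div_pos (S.hh i) (S.hfh.V_pos h1 (h2.trans S.hMA)))

theorem lo'_le_up (S : Setup n a h r M f g) {T : ℝ} {i : Fin n} (h1 : 0 ≤ T) (h2 : T ≤ ∑ i, a i)
    (hu : h i ≤ a i * Vv f T) : max 0 (lo a h f g i T) ≤ up a h f i T :=
  max_le (S.up_pos h1 h2).le (S.lo_le_up h1 h2 hu)

theorem xi_mem (S : Setup n a h r M f g) {T : ℝ} (i : Fin n) (h1 : 0 ≤ T) (h2 : T ≤ ∑ i, a i) :
    xi a h r f g i T ∈ Icc 0 (a i) := by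
  rw [xi]
  split_ifs with hcase
  · constructor
    · exact le_max_of_le_left (le_max_left _ _)
    · exact max_le (max_le (S.ha i).le (S.lo_le_a h1 h2 hcase))
        ((min_le_right _ _).trans (min_le_left _ _))
  · exact ⟨(S.ha i).le, le_rfl⟩

theorem Th_mono (S : Setup n a h r M f g) {T x1 x2 : ℝ} (hT0 : 0 < T) (hTA : T ≤ ∑ i, a i)
    (h12 : x1 ≤ x2) : Th r f T x1 ≤ Th r f T x2 := by
  have hfV : f T ≤ Vv f T := S.hfh.f_le_V hT0 (hTA.trans S.hMA)
  rw [Th, Th]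
  apply sub_le_sub_left
  apply mul_le_mul_of_nonneg_left _ (by linarith [S.hr] : (0:ℝ) ≤ 1 + r)
  rw [div_le_div_iff₀ hT0 hT0]
  nlinarith [mul_nonneg (mul_nonneg (sub_nonneg.2 h12) (sub_nonneg.2 hfV)) hT0.le]

theorem Th_mm (S : Setup n a h r M f g) {T : ℝ} (hT0 : 0 < T) (hTA : T ≤ ∑ i, a i) :
    Th r f T (mm r f T) = 0 := by
  have hfV : f T < Vv f T := S.hfh.f_lt_V hT0 (hTA.trans S.hMA)
  have h1 : Vv f T - f T ≠ 0 := (sub_pos.2 hfV).ne'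
  have h2 : (1:ℝ) + r ≠ 0 := by linarith [S.hr]
  rw [Th, mm]
  field_simp
  ring

theorem Wfun_Th (S : Setup n a h r M f g) {T x c : ℝ} (hT0 : 0 < T) (hc : c = T - x) :
    1 - (1 + r) * Wfun f c x = Th r f T x := by
  rw [Wfun, Th, hc, sub_add_cancel]

/-- if the selected response is below the upper bound, marginal objective is nonnegative -/
theorem Th_xi_nonneg (S : Setup n a h r M f g) {T : ℝ} {i : Fin n} (hT0 : 0 < T)
    (hTA : T ≤ ∑ i, a i) (hu : h i ≤ a i * Vv f T)
    (hlt : xi a h r f g i T < up a h f i T) : 0 ≤ Th r f T (xi a h r f g i T) := by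
  rcases le_total (mm r f T) (max 0 (lo a h f g i T)) with hm | hm
  · have hxi : xi a h r f g i T = max 0 (lo a h f g i T) := by
      rw [xi, if_pos hu]
      rw [max_eq_left ((min_le_left _ _).trans hm)]
    rw [hxi]
    calc (0:ℝ) = Th r f T (mm r f T) := (S.Th_mm hT0 hTA).symm
      _ ≤ _ := S.Th_mono hT0 hTA hm
  · rcases le_total (mm r f T) (up a h f i T) with hm2 | hm2
    · have hxi : xi a h r f g i T = mm r f T := by
        rw [xi, if_pos hu, min_eq_left hm2, max_eq_right hm]
      rw [hxi, S.Th_mm hT0 hTA]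
    · have hxi : xi a h r f g i T = up a h f i T := by
        rw [xi, if_pos hu, min_eq_right hm2, max_eq_right (S.lo'_le_up hT0.le hTA hu)]
      rw [hxi] at hlt
      exact absurd rfl hlt.ne

/-- if the selected response is above the lower bound, marginal objective is nonpositive -/
theorem Th_xi_nonpos (S : Setup n a h r M f g) {T : ℝ} {i : Fin n} (hT0 : 0 < T)
    (hTA : T ≤ ∑ i, a i) (hu : h i ≤ a i * Vv f T)
    (hlt : max 0 (lo a h f g i T) < xi a h r f g i T) : Th r f T (xi a h r f g i T) ≤ 0 := by
  rcases le_total (mm r f T) (max 0 (lo a h f g i T)) with hm | hm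
  · have hxi : xi a h r f g i T = max 0 (lo a h f g i T) := by
      rw [xi, if_pos hu]
      rw [max_eq_left ((min_le_left _ _).trans hm)]
    rw [hxi] at hlt
    exact absurd rfl hlt.ne
  · rcases le_total (mm r f T) (up a h f i T) with hm2 | hm2
    · have hxi : xi a h r f g i T = mm r f T := by
        rw [xi, if_pos hu, min_eq_left hm2, max_eq_right hm]
      rw [hxi, S.Th_mm hT0 hTA]
    · have hxi : xi a h r f g i T = up a h f i T := by
        rw [xi, if_pos hu, min_eq_right hm2, max_eq_right (S.lo'_le_up hT0.le hTA hu)]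
      rw [hxi]
      calc Th r f T (up a h f i T) ≤ Th r f T (mm r f T) := S.Th_mono hT0 hTA hm2
        _ = 0 := S.Th_mm hT0 hTA

end Setup
end Main

section Main2

variable {n : ℕ} {a h : Fin n → ℝ} {r M : ℝ} {f g : ℝ → ℝ}

theorem vwap_eq_Vv (i : Fin n) (s : Fin n → ℝ) : vwap n f i s = Vv f (∑ j, s j) := rfl

theorem obj_formula (i : Fin n) (s : Fin n → ℝ) :
    obj n r h (vwap n f) i s = s i + r * h i - (1 + r) * (s i * Vv f (∑ j, s j)) := by
  rw [obj, vwap_eq_Vv]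
  ring

theorem sum_update_eq (s : Fin n → ℝ) (i : Fin n) (x : ℝ) :
    ∑ j, Function.update s i x j = (∑ j ∈ Finset.univ.erase i, s j) + x := by
  rw [Finset.sum_update_of_mem (Finset.mem_univ i), Finset.erase_eq, add_comm]

/-- the set of clearing equilibria -/
def Cset (n : ℕ) (a h : Fin n → ℝ) (r : ℝ) (f g : ℝ → ℝ) : Set (Fin n → ℝ) :=
  {s | memD n a s ∧
    NashP2 n a h r (g (∑ i, s i)) (fun _ => Vv f (∑ i, s i)) (vwap n f) s}

namespace Setup

theorem clearing_of_root (S : Setup n a h r M f g) {T : ℝ} (hT0 : 0 < T)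
    (hTA : T ≤ ∑ i, a i) (hroot : ∑ i, xi a h r f g i T = T) :
    (fun i => xi a h r f g i T) ∈ Cset n a h r f g := by
  set s : Fin n → ℝ := fun i => xi a h r f g i T with hs
  have hsum : ∑ i, s i = T := hroot
  have hmem : ∀ i, s i ∈ Icc 0 (a i) := fun i => S.xi_mem i hT0.le hTA
  refine ⟨hmem, ?_⟩
  intro i
  constructor
  · -- unforced clause
    intro hle
    simp only [hsum] at hle
    have hu : h i ≤ a i * Vv f T := hle
    have hxi_eq : s i = max (max 0 (lo a h f g i T)) (min (mm r f T) (up a h f i T)) := by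
      rw [hs]; simp only; rw [xi, if_pos hu]
    have hsi_up : s i ≤ up a h f i T := by
      rw [hxi_eq]
      exact max_le (S.lo'_le_up hT0.le hTA hu) (min_le_right _ _)
    have hlo_si : lo a h f g i T ≤ s i := by
      rw [hxi_eq]
      exact (le_max_right _ _).trans (le_max_left _ _)
    have hlo'_si : max 0 (lo a h f g i T) ≤ s i := by
      rw [hxi_eq]; exact le_max_left _ _
    constructor
    · -- feasibility
      refine ⟨hmem i, ?_, ?_⟩
      · simp only [hsum]
        exact hsi_up.trans (min_le_right _ _)
      · simp only [hsum]
        exact hlo_si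
    · -- optimality
      intro x hx
      obtain ⟨⟨hx0, hxa⟩, hxup, hxlo⟩ := hx
      simp only [hsum] at hxup hxlo
      set c : ℝ := ∑ j ∈ Finset.univ.erase i, s j with hcdef
      have hcsum : c + s i = T := by
        rw [hcdef, Finset.sum_erase_add _ _ (Finset.mem_univ i), hsum]
      have hc0 : 0 ≤ c := Finset.sum_nonneg (fun j _ => (hmem j).1)
      have hca : c + a i ≤ ∑ j, a j := by
        have h1 : c ≤ ∑ j ∈ Finset.univ.erase i, a j :=
          Finset.sum_le_sum (fun j _ => (hmem j).2)
        have h2 : (∑ j ∈ Finset.univ.erase i, a j) + a i = ∑ j, a j :=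
          Finset.sum_erase_add _ _ (Finset.mem_univ i)
        linarith
      have hLHS : obj n r h (vwap n f) i s
          = s i + r * h i - (1 + r) * (s i * Vv f (c + s i)) := by
        rw [obj_formula, hsum, hcsum]
      have hRHS : obj n r h (vwap n f) i (Function.update s i x)
          = x + r * h i - (1 + r) * (x * Vv f (c + x)) := by
        rw [obj_formula, sum_update_eq, Function.update_self, ← hcdef, add_comm c x]
      rw [hLHS, hRHS]
      rcases lt_trichotomy x (s i) with hcmp | hcmp | hcmp
      · refine bank_opt S.hfh (h i) S.hr hc0 (hmem i).1 (hmem i).2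
          (by rw [hcsum]; exact hT0) (hca.trans S.hMA) hx0 hxa (Or.inl ⟨hcmp.le, ?_⟩)
        rw [S.Wfun_Th hT0 (by linarith : c = T - s i)]
        exact S.Th_xi_nonpos hT0 hTA hu (lt_of_le_of_lt (max_le hx0 hxlo) hcmp)
      · exact le_of_eq (by rw [hcmp])
      · refine bank_opt S.hfh (h i) S.hr hc0 (hmem i).1 (hmem i).2
          (by rw [hcsum]; exact hT0) (hca.trans S.hMA) hx0 hxa (Or.inr ⟨hcmp.le, ?_⟩)
        rw [S.Wfun_Th hT0 (by linarith : c = T - s i)]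
        apply S.Th_xi_nonneg hT0 hTA hu
        have hxup' : x ≤ up a h f i T := le_min hxa hxup
        exact lt_of_lt_of_le hcmp hxup'
  · -- forced clause
    intro hlt
    have hlt' : a i * Vv f T < h i := by simpa [hsum] using hlt
    show xi a h r f g i T = a i
    rw [xi, if_neg (not_le.2 hlt')]

theorem zero_clearing (S : Setup n a h r M f g) (hr0 : r = 0) (hha : ∀ i, h i ≤ a i)
    (hl0 : ∀ i, h i ≤ a i * g 0) : (fun _ => (0:ℝ)) ∈ Cset n a h r f g := by
  have hsum : ∑ i : Fin n, (0:ℝ) = 0 := Finset.sum_const_zero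
  refine ⟨fun i => ⟨le_rfl, (S.ha i).le⟩, ?_⟩
  intro i
  constructor
  · intro _
    constructor
    · refine ⟨⟨le_rfl, (S.ha i).le⟩, ?_, ?_⟩
      · simp only [hsum, FH.V_zero]
        exact div_nonneg (S.hh i).le zero_le_one
      · simp only [hsum, FH.V_zero]
        apply div_nonpos_of_nonpos_of_nonneg
        · linarith [hl0 i]
        · have := S.glt 0 ⟨le_rfl, S.Apos.le⟩
          rw [FH.V_zero] at this
          linarith
    · intro x hx
      obtain ⟨⟨hx0, hxa⟩, _, _⟩ := hx
      rw [obj_formula, obj_formula, sum_update_eq, Function.update_self]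
      have hsum2 : (∑ j ∈ Finset.univ.erase i, (0:ℝ)) + x = x := by
        rw [Finset.sum_const_zero, zero_add]
      rw [hsum2, hsum, hr0]
      have hVx : Vv f x ≤ 1 := by
        apply S.hfh.V_le_one hx0
        calc x ≤ a i := hxa
          _ ≤ ∑ j, a j := Finset.single_le_sum (fun j _ => (S.ha j).le) (Finset.mem_univ i)
          _ ≤ M := S.hMA
      nlinarith
  · intro hlt
    exfalso
    simp only [hsum, FH.V_zero, mul_one] at hlt
    exact absurd hlt (not_lt.2 (hha i))

end Setup
end Main2

section Main3

variable {n : ℕ} {a h : Fin n → ℝ} {r M : ℝ} {f g : ℝ → ℝ}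

namespace Setup

theorem xi_contOn (S : Setup n a h r M f g) {T₀ : ℝ} (hT₀ : 0 < T₀) (i : Fin n) :
    ContinuousOn (xi a h r f g i) (Icc T₀ (∑ j, a j)) := by
  set A := ∑ j, a j with hA
  set Sset := Icc T₀ A with hSset
  have hsub : Sset ⊆ Icc 0 M := fun x hx => ⟨hT₀.le.trans hx.1, hx.2.trans S.hMA⟩
  intro T hT
  have hT0 : 0 < T := hT₀.trans_le hT.1
  have hTA : T ≤ A := hT.2
  have hVc : ContinuousWithinAt (Vv f) Sset T := (S.hfh.V_cont.mono hsub) T hT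
  have hgc : ContinuousWithinAt g Sset T := (S.gcont.mono hsub) T hT
  have hfc : ContinuousWithinAt f Sset T := (S.hfh.cont.mono hsub) T hT
  have hVg : 0 < Vv f T - g T := S.Vg_pos hT0.le hTA
  have hVpos : 0 < Vv f T := S.hfh.V_pos hT0.le (hTA.trans S.hMA)
  have hVf : 0 < Vv f T - f T := sub_pos.2 (S.hfh.f_lt_V hT0 (hTA.trans S.hMA))
  have hr1 : (0:ℝ) < 1 + r := by linarith [S.hr]
  have hloc : ContinuousWithinAt (lo a h f g i) Sset T := by
    apply ContinuousWithinAt.div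
    · exact continuousWithinAt_const.sub (continuousWithinAt_const.mul hgc)
    · exact hVc.sub hgc
    · exact hVg.ne'
  have hupc : ContinuousWithinAt (up a h f i) Sset T :=
    continuousWithinAt_const.min (continuousWithinAt_const.div hVc hVpos.ne')
  have hmmc : ContinuousWithinAt (mm r f) Sset T := by
    apply ContinuousWithinAt.div
    · exact ((continuousWithinAt_const.mul hVc).sub continuousWithinAt_const).mul
        continuousWithinAt_id
    · exact continuousWithinAt_const.mul (hVc.sub hfc)
    · exact (mul_pos hr1 hVf).ne'
  have hclampc : ContinuousWithinAt
      (fun T' => max (max 0 (lo a h f g i T')) (min (mm r f T') (up a h f i T'))) Sset T :=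
    (continuousWithinAt_const.max hloc).max (hmmc.min hupc)
  rcases lt_trichotomy (h i) (a i * Vv f T) with hc1 | hc2 | hc3
  · -- strictly unforced nearby
    have hev : ∀ᶠ T' in nhdsWithin T Sset, h i < a i * Vv f T' :=
      (continuousWithinAt_const.mul hVc).eventually (eventually_gt_nhds hc1)
    apply hclampc.congr_of_eventuallyEq
    · filter_upwards [hev] with T' hT'
      rw [xi, if_pos hT'.le]
    · rw [xi, if_pos hc1.le]
  · -- boundary case: squeeze to a i
    have hxb : ∀ T' ∈ Sset, min (max 0 (lo a h f g i T')) (a i) ≤ xi a h r f g i T' ∧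
        xi a h r f g i T' ≤ max (up a h f i T') (a i) := by
      intro T' hT'
      have hT'0 : 0 < T' := hT₀.trans_le hT'.1
      rw [xi]
      split_ifs with hcs
      · exact ⟨(min_le_left _ _).trans (le_max_left _ _),
          (max_le (S.lo'_le_up hT'0.le hT'.2 hcs) ((min_le_right _ _))).trans (le_max_left _ _)⟩
      · exact ⟨min_le_right _ _, le_max_right _ _⟩
    have hloT : lo a h f g i T = a i := by
      rw [lo, hc2, div_eq_iff hVg.ne']
      ring
    have hupT : up a h f i T = a i := by
      rw [up, hc2, mul_div_assoc, div_self hVpos.ne', mul_one, min_self]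
    have hxiT : xi a h r f g i T = a i := by
      rw [xi, if_pos hc2.le, hloT, max_eq_right (S.ha i).le]
      exact max_eq_left ((min_le_right _ _).trans_eq hupT)
    have hlow : Filter.Tendsto (fun T' => min (max 0 (lo a h f g i T')) (a i))
        (nhdsWithin T Sset) (nhds (a i)) := by
      have hcw : ContinuousWithinAt (fun T' => min (max 0 (lo a h f g i T')) (a i)) Sset T :=
        (continuousWithinAt_const.max hloc).min continuousWithinAt_const
      have : min (max 0 (lo a h f g i T)) (a i) = a i := by
        rw [hloT, max_eq_right (S.ha i).le, min_self]
      rw [ContinuousWithinAt, this] at hcw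
      exact hcw
    have hhigh : Filter.Tendsto (fun T' => max (up a h f i T') (a i))
        (nhdsWithin T Sset) (nhds (a i)) := by
      have hcw : ContinuousWithinAt (fun T' => max (up a h f i T') (a i)) Sset T :=
        hupc.max continuousWithinAt_const
      have : max (up a h f i T) (a i) = a i := by rw [hupT, max_self]
      rw [ContinuousWithinAt, this] at hcw
      exact hcw
    rw [ContinuousWithinAt, hxiT]
    apply tendsto_of_tendsto_of_tendsto_of_le_of_le' hlow hhigh
    · exact Filter.eventually_of_mem self_mem_nhdsWithin (fun T' hT' => (hxb T' hT').1)
    · exact Filter.eventually_of_mem self_mem_nhdsWithin (fun T' hT' => (hxb T' hT').2)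
  · -- strictly forced nearby
    have hev : ∀ᶠ T' in nhdsWithin T Sset, a i * Vv f T' < h i :=
      (continuousWithinAt_const.mul hVc).eventually (eventually_lt_nhds hc3)
    apply continuousWithinAt_const.congr_of_eventuallyEq (f := fun _ => a i)
    · filter_upwards [hev] with T' hT'
      rw [xi, if_neg (not_le.2 hT')]
    · rw [xi, if_neg (not_le.2 hc3)]

end Setup
end Main3

section Main4

variable {n : ℕ} {a h : Fin n → ℝ} {r M : ℝ} {f g : ℝ → ℝ}

namespace Setup

theorem exists_clearing (S : Setup n a h r M f g) : (Cset n a h r f g).Nonempty := by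
  have hApos := S.Apos
  by_cases hEx : ∃ T, 0 < T ∧ T ≤ (∑ j, a j) ∧ T ≤ ∑ i, xi a h r f g i T
  · -- IVT case
    obtain ⟨T₀, hT₀0, hT₀A, hd0⟩ := hEx
    have hdc : ContinuousOn (fun T => (∑ i, xi a h r f g i T) - T) (Icc T₀ (∑ j, a j)) := by
      apply ContinuousOn.sub _ continuousOn_id
      exact continuousOn_finset_sum _ (fun i _ => S.xi_contOn hT₀0 i)
    have hdA : (∑ i, xi a h r f g i (∑ j, a j)) - (∑ j, a j) ≤ 0 := by
      have : ∑ i, xi a h r f g i (∑ j, a j) ≤ ∑ j, a j :=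
        Finset.sum_le_sum (fun i _ => (S.xi_mem i hApos.le le_rfl).2)
      linarith
    have hmem0 : (0:ℝ) ∈ Icc ((∑ i, xi a h r f g i (∑ j, a j)) - (∑ j, a j))
        ((∑ i, xi a h r f g i T₀) - T₀) := ⟨hdA, by linarith⟩
    obtain ⟨T₁, hT₁mem, hT₁⟩ := intermediate_value_Icc' hT₀A hdc hmem0
    have hroot : ∑ i, xi a h r f g i T₁ - T₁ = 0 := hT₁
    exact ⟨_, S.clearing_of_root (hT₀0.trans_le hT₁mem.1) hT₁mem.2 (by linarith)⟩
  · push_neg at hEx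
    haveI hNB : (nhdsWithin 0 (Ioc (0:ℝ) (∑ j, a j))).NeBot := by
      apply mem_closure_iff_nhdsWithin_neBot.mp
      rw [closure_Ioc hApos.ne]
      exact ⟨le_rfl, hApos.le⟩
    have hIocsub : Ioc (0:ℝ) (∑ j, a j) ⊆ Icc 0 M :=
      fun x hx => ⟨hx.1.le, hx.2.trans S.hMA⟩
    have htV : Filter.Tendsto (Vv f) (nhdsWithin 0 (Ioc (0:ℝ) (∑ j, a j))) (nhds 1) := by
      have := (S.hfh.V_cont 0 ⟨le_rfl, hApos.le.trans S.hMA⟩).mono hIocsub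
      rwa [ContinuousWithinAt, FH.V_zero] at this
    have htg : Filter.Tendsto g (nhdsWithin 0 (Ioc (0:ℝ) (∑ j, a j))) (nhds (g 0)) :=
      (S.gcont 0 ⟨le_rfl, hApos.le.trans S.hMA⟩).mono hIocsub
    have hsmall : ∀ {ε : ℝ}, 0 < ε →
        ∀ᶠ T in nhdsWithin 0 (Ioc (0:ℝ) (∑ j, a j)), T < ε := by
      intro ε hε
      have : Filter.Tendsto (fun T : ℝ => T) (nhdsWithin 0 (Ioc (0:ℝ) (∑ j, a j))) (nhds 0) :=
        Filter.tendsto_id.mono_left nhdsWithin_le_nhds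
      exact this.eventually (eventually_lt_nhds hε)
    have key : ∀ (T : ℝ) (i : Fin n), 0 < T → T ≤ (∑ j, a j) →
        xi a h r f g i T ≤ ∑ j, xi a h r f g j T := fun T i hT0 hTA =>
      Finset.single_le_sum (fun j _ => (S.xi_mem j hT0.le hTA).1) (Finset.mem_univ i)
    -- (a) every bank can cover by full liquidation
    have haa : ∀ i, h i < a i := by
      intro i
      by_contra hai
      push_neg at hai
      set T := min (a i) (∑ j, a j) / 2 with hT
      have hT0 : 0 < T := by
        have := S.ha i
        simp only [hT, lt_min_iff]
        positivity
      have hTA : T ≤ ∑ j, a j := by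
        have : min (a i) (∑ j, a j) ≤ ∑ j, a j := min_le_right _ _
        linarith
      have hV1 : Vv f T < 1 := S.hfh.V_lt_one hT0 (hTA.trans S.hMA)
      have hforced : a i * Vv f T < h i := by nlinarith [S.ha i]
      have hxi : xi a h r f g i T = a i := by rw [xi, if_neg (not_le.2 hforced)]
      have h1 := key T i hT0 hTA
      have h2 := hEx T hT0 hTA
      rw [hxi] at h1
      have : T ≤ a i / 2 := by
        have : min (a i) (∑ j, a j) ≤ a i := min_le_left _ _
        linarith
      linarith [S.ha i]
    -- (b) the repo rate is zero
    have hr0 : r = 0 := by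
      by_contra hrne
      have hrpos : 0 < r := lt_of_le_of_ne S.hr (Ne.symm hrne)
      have hr1 : (0:ℝ) < 1 + r := by linarith
      obtain ⟨f'0, hf'0⟩ : ∃ y, y = derivWithin f (Icc 0 M) 0 := ⟨_, rfl⟩
      have hder : HasDerivWithinAt f f'0 (Icc 0 M) 0 := by
        rw [hf'0]; exact S.fdiff.hasDerivWithinAt
      rw [hasDerivWithinAt_iff_tendsto_slope] at hder
      have hsub2 : Ioc (0:ℝ) (∑ j, a j) ⊆ (Icc 0 M) \ {0} :=
        fun x hx => ⟨hIocsub hx, hx.1.ne'⟩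
      have hslope : Filter.Tendsto (slope f 0) (nhdsWithin 0 (Ioc (0:ℝ) (∑ j, a j)))
          (nhds f'0) := hder.mono_left (nhdsWithin_mono 0 hsub2)
      have hslev : ∀ᶠ T in nhdsWithin 0 (Ioc (0:ℝ) (∑ j, a j)),
          0 < T ∧ T ≤ (∑ j, a j) ∧ 1 - f T < (1 - f'0) * T := by
        filter_upwards [hslope.eventually (eventually_gt_nhds
          (by linarith : f'0 - 1 < f'0)), self_mem_nhdsWithin] with T h1 h2
        refine ⟨h2.1, h2.2, ?_⟩
        rw [slope_def_field, S.hfh.f0, sub_zero] at h1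
        rw [lt_div_iff₀ h2.1] at h1
        nlinarith [h1]
      -- K is positive
      obtain ⟨T₁, hT₁0, hT₁A, hT₁b⟩ := hslev.exists
      have hfT₁ : f T₁ < 1 := by
        rw [← S.hfh.f0]
        exact S.hfh.anti ⟨le_rfl, hApos.le.trans S.hMA⟩ ⟨hT₁0.le, hT₁A.trans S.hMA⟩ hT₁0
      obtain ⟨K, hK⟩ : ∃ K, K = 1 - f'0 := ⟨_, rfl⟩
      rw [← hK] at hslev hT₁b
      have hKpos : 0 < K := by
        by_contra hKn
        push_neg at hKn
        have := mul_le_mul_of_nonneg_right hKn hT₁0.le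
        rw [zero_mul] at this
        linarith
      obtain ⟨κ, hκ⟩ : ∃ k, k = r / (2 * (1 + r) * K) := ⟨_, rfl⟩
      have hκpos : 0 < κ := by
        rw [hκ]; positivity
      have hmb : ∀ᶠ T in nhdsWithin 0 (Ioc (0:ℝ) (∑ j, a j)), κ ≤ mm r f T := by
        filter_upwards [hslev, hsmall (show (0:ℝ) < r / (2 * (1 + r) * K) from hκ ▸ hκpos)]
          with T hT hTd
        obtain ⟨hT0, hTA, hfb⟩ := hT
        have hTM : T ≤ M := hTA.trans S.hMA
        have hfV : f T ≤ Vv f T := S.hfh.f_le_V hT0 hTM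
        have hVf : 0 < Vv f T - f T := sub_pos.2 (S.hfh.f_lt_V hT0 hTM)
        have hV1 : Vv f T ≤ 1 := S.hfh.V_le_one hT0.le hTM
        have hdenom : 0 < (1 + r) * (Vv f T - f T) := mul_pos hr1 hVf
        have hTd' : (1 + r) * K * T ≤ r / 2 := by
          rw [lt_div_iff₀ (by positivity : (0:ℝ) < 2 * (1 + r) * K)] at hTd
          nlinarith
        have m1 : (1 + r) * (1 - f T) ≤ (1 + r) * (K * T) :=
          mul_le_mul_of_nonneg_left hfb.le hr1.le
        have m2 : (1 + r) * (f T) ≤ (1 + r) * Vv f T := mul_le_mul_of_nonneg_left hfV hr1.le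
        have hnum : r / 2 ≤ (1 + r) * Vv f T - 1 := by
          have hTd'' : (1 + r) * (K * T) ≤ r / 2 := by linarith [hTd']
          linarith
        have e1 : κ * ((1 + r) * (Vv f T - f T)) ≤ κ * ((1 + r) * (K * T)) := by
          apply mul_le_mul_of_nonneg_left _ hκpos.le
          apply mul_le_mul_of_nonneg_left _ hr1.le
          nlinarith
        have e2 : κ * ((1 + r) * (K * T)) = (r / 2) * T := by
          rw [hκ]
          field_simp
        have e3 : (r / 2) * T ≤ ((1 + r) * Vv f T - 1) * T := mul_le_mul_of_nonneg_right hnum hT0.le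
        rw [mm, le_div_iff₀ hdenom]
        exact le_trans (e1.trans e2.le) e3
      set i₀ : Fin n := ⟨0, S.npos⟩ with hi₀
      set ρ := min κ (min (a i₀) (h i₀)) with hρ
      have hρpos : 0 < ρ := lt_min hκpos (lt_min (S.ha i₀) (S.hh i₀))
      have hxiρ : ∀ᶠ T in nhdsWithin 0 (Ioc (0:ℝ) (∑ j, a j)),
          ρ ≤ xi a h r f g i₀ T := by
        filter_upwards [hmb, self_mem_nhdsWithin] with T hm hT
        have hT0 : (0:ℝ) < T := hT.1
        have hTM : T ≤ M := hT.2.trans S.hMA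
        have hVpos : 0 < Vv f T := S.hfh.V_pos hT0.le hTM
        have hV1 : Vv f T ≤ 1 := S.hfh.V_le_one hT0.le hTM
        rw [xi]
        split_ifs with hcs
        · apply le_trans _ (le_max_right _ _)
          apply le_min ((min_le_left _ _).trans hm)
          apply le_trans (min_le_right κ _)
          apply le_min (min_le_left _ _)
          apply le_trans (min_le_right (a i₀) _)
          rw [le_div_iff₀ hVpos]
          nlinarith [S.hh i₀]
        · exact le_trans (min_le_right _ _) ((min_le_left _ _))
      obtain ⟨T, hρxi, hTρ, hT0A⟩ := (hxiρ.and ((hsmall hρpos).and self_mem_nhdsWithin)).exists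
      have h1 := key T i₀ hT0A.1 hT0A.2
      have h2 := hEx T hT0A.1 hT0A.2
      linarith
    -- (c) no liquidation needed at the initial haircut
    have hc0 : ∀ i, h i ≤ a i * g 0 := by
      intro i
      by_contra hci
      push_neg at hci
      have hg01 : g 0 < 1 := by
        have := S.glt 0 ⟨le_rfl, hApos.le⟩
        rwa [FH.V_zero] at this
      set L0 := (h i - a i * g 0) / (1 - g 0) with hL0
      have hL0pos : 0 < L0 := div_pos (by linarith) (by linarith)
      have hloT : Filter.Tendsto (lo a h f g i) (nhdsWithin 0 (Ioc (0:ℝ) (∑ j, a j)))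
          (nhds L0) := by
        rw [hL0]
        apply Filter.Tendsto.div
          (tendsto_const_nhds.sub (tendsto_const_nhds.mul htg)) (htV.sub htg)
          (by linarith : (1:ℝ) - g 0 ≠ 0)
      have hev1 : ∀ᶠ T in nhdsWithin 0 (Ioc (0:ℝ) (∑ j, a j)), L0 / 2 < lo a h f g i T :=
        hloT.eventually (eventually_gt_nhds (by linarith))
      have hev2 : ∀ᶠ T in nhdsWithin 0 (Ioc (0:ℝ) (∑ j, a j)), h i ≤ a i * Vv f T := by
        have hlim : Filter.Tendsto (fun T => a i * Vv f T)
            (nhdsWithin 0 (Ioc (0:ℝ) (∑ j, a j))) (nhds (a i)) := by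
          have := tendsto_const_nhds (α := ℝ) (x := a i)
            (f := nhdsWithin 0 (Ioc (0:ℝ) (∑ j, a j))) |>.mul htV
          rwa [mul_one] at this
        exact (hlim.eventually (eventually_gt_nhds (haa i))).mono (fun T hT => hT.le)
      have hxiev : ∀ᶠ T in nhdsWithin 0 (Ioc (0:ℝ) (∑ j, a j)),
          L0 / 2 ≤ xi a h r f g i T := by
        filter_upwards [hev1, hev2] with T h1 h2
        rw [xi, if_pos h2]
        exact le_trans (le_trans h1.le (le_max_right 0 _)) (le_max_left _ _)
      obtain ⟨T, hρxi, hTρ, hT0A⟩ :=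
        (hxiev.and ((hsmall (by linarith : (0:ℝ) < L0 / 2)).and self_mem_nhdsWithin)).exists
      have h1 := key T i hT0A.1 hT0A.2
      have h2 := hEx T hT0A.1 hT0A.2
      linarith
    exact ⟨_, S.zero_clearing hr0 (fun i => (haa i).le) hc0⟩

end Setup
end Main4

section Main5

variable {n : ℕ} {a h : Fin n → ℝ} {r M : ℝ} {f g : ℝ → ℝ}

namespace Setup

theorem cset_isClosed (S : Setup n a h r M f g) : IsClosed (Cset n a h r f g) := by
  apply IsSeqClosed.isClosed
  intro u s hu hus
  have hui : ∀ i, Filter.Tendsto (fun k => u k i) Filter.atTop (nhds (s i)) :=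
    fun i => (tendsto_pi_nhds.mp hus) i
  have hmemk : ∀ k i, u k i ∈ Icc 0 (a i) := fun k i => (hu k).1 i
  have hmem : ∀ i, s i ∈ Icc 0 (a i) := fun i =>
    isClosed_Icc.mem_of_tendsto (hui i) (Filter.Eventually.of_forall (fun k => hmemk k i))
  have hsum : Filter.Tendsto (fun k => ∑ i, u k i) Filter.atTop (nhds (∑ i, s i)) := by
    apply tendsto_finset_sum
    exact fun i _ => hui i
  have hTk : ∀ k, (∑ i, u k i) ∈ Icc (0:ℝ) (∑ i, a i) :=
    fun k => ⟨Finset.sum_nonneg (fun i _ => (hmemk k i).1),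
      Finset.sum_le_sum (fun i _ => (hmemk k i).2)⟩
  have hT : (∑ i, s i) ∈ Icc (0:ℝ) (∑ i, a i) :=
    ⟨Finset.sum_nonneg (fun i _ => (hmem i).1), Finset.sum_le_sum (fun i _ => (hmem i).2)⟩
  have hcomp : ∀ (F : ℝ → ℝ), ContinuousOn F (Icc 0 M) → ∀ {c : ℕ → ℝ} {c₀ : ℝ},
      Filter.Tendsto c Filter.atTop (nhds c₀) → (∀ k, c k ∈ Icc (0:ℝ) M) →
      c₀ ∈ Icc (0:ℝ) M → Filter.Tendsto (fun k => F (c k)) Filter.atTop (nhds (F c₀)) := by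
    intro F hF c c₀ hc hck hc0
    exact (hF c₀ hc0).tendsto.comp
      (tendsto_nhdsWithin_iff.mpr ⟨hc, Filter.Eventually.of_forall hck⟩)
  have hIccM : ∀ {t : ℝ}, t ∈ Icc (0:ℝ) (∑ i, a i) → t ∈ Icc (0:ℝ) M :=
    fun ht => ⟨ht.1, ht.2.trans S.hMA⟩
  have hVt : Filter.Tendsto (fun k => Vv f (∑ i, u k i)) Filter.atTop
      (nhds (Vv f (∑ i, s i))) :=
    hcomp _ S.hfh.V_cont hsum (fun k => hIccM (hTk k)) (hIccM hT)
  have hgt : Filter.Tendsto (fun k => g (∑ i, u k i)) Filter.atTop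
      (nhds (g (∑ i, s i))) :=
    hcomp _ S.gcont hsum (fun k => hIccM (hTk k)) (hIccM hT)
  refine ⟨hmem, ?_⟩
  intro i
  rcases lt_or_ge (a i * Vv f (∑ i, s i)) (h i) with hC | hC
  · -- forced at the limit
    constructor
    · intro hle
      exact absurd hle (not_le.2 hC)
    · intro _
      have hev : ∀ᶠ k in Filter.atTop, a i * Vv f (∑ j, u k j) < h i :=
        (tendsto_const_nhds.mul hVt).eventually (eventually_lt_nhds hC)
      have heq : ∀ᶠ k in Filter.atTop, u k i = a i := by
        filter_upwards [hev] with k hk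
        exact ((hu k).2 i).2 hk
      exact tendsto_nhds_unique ((hui i).congr' heq) tendsto_const_nhds
  · -- unforced at the limit
    have hVg : 0 < Vv f (∑ i, s i) - g (∑ i, s i) := S.Vg_pos hT.1 hT.2
    have hVpos : 0 < Vv f (∑ i, s i) := S.hfh.V_pos hT.1 (hT.2.trans S.hMA)
    constructor
    swap
    · intro hlt
      exact absurd hC (not_le.2 hlt)
    intro _
    by_cases hFreq : ∃ᶠ k in Filter.atTop, a i * Vv f (∑ j, u k j) < h i
    · -- frequently forced: boundary case, the feasible set is {a i}
      have hsia : s i = a i := by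
        have heq : ∃ᶠ k in Filter.atTop, u k i = a i :=
          hFreq.mono (fun k hk => ((hu k).2 i).2 hk)
        exact tendsto_nhds_unique_of_frequently_eq (hui i) tendsto_const_nhds heq
      have hqb : h i = a i * Vv f (∑ i, s i) := by
        refine le_antisymm hC ?_
        by_contra hgt2
        push_neg at hgt2
        have hev : ∀ᶠ k in Filter.atTop, h i < a i * Vv f (∑ j, u k j) :=
          (tendsto_const_nhds.mul hVt).eventually (eventually_gt_nhds hgt2)
        exact (hFreq.and_eventually hev).exists.elim (fun k hk => absurd hk.2 (not_lt.2 hk.1.le))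
      have hdiv : h i / Vv f (∑ i, s i) = a i := by
        rw [hqb, mul_div_assoc, div_self hVpos.ne', mul_one]
      have hlo : (h i - a i * g (∑ i, s i)) / (Vv f (∑ i, s i) - g (∑ i, s i)) = a i := by
        rw [hqb, div_eq_iff hVg.ne']
        ring
      constructor
      · refine ⟨hmem i, ?_, ?_⟩
        · rw [hdiv, hsia]
        · rw [hlo, hsia]
      · intro x hx
        obtain ⟨⟨hx0, hxa⟩, hxup, hxlo⟩ := hx
        have hxe : x = s i := by
          rw [hdiv] at hxup
          rw [hlo] at hxlo
          rw [hsia]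
          exact le_antisymm hxup hxlo
        rw [hxe, Function.update_eq_self]
    · -- eventually unforced
      rw [Filter.not_frequently] at hFreq
      have hev : ∀ᶠ k in Filter.atTop, h i ≤ a i * Vv f (∑ j, u k j) := by
        filter_upwards [hFreq] with k hk
        exact not_lt.1 hk
      have hfeasev : ∀ᶠ k in Filter.atTop,
          u k i ≤ h i / Vv f (∑ j, u k j) ∧
          (h i - a i * g (∑ j, u k j)) / (Vv f (∑ j, u k j) - g (∑ j, u k j)) ≤ u k i := by
        filter_upwards [hev] with k hk
        exact ⟨(((hu k).2 i).1 hk).1.2.1, (((hu k).2 i).1 hk).1.2.2⟩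
      have hupt : Filter.Tendsto (fun k => h i / Vv f (∑ j, u k j)) Filter.atTop
          (nhds (h i / Vv f (∑ i, s i))) := tendsto_const_nhds.div hVt hVpos.ne'
      have hlot : Filter.Tendsto
          (fun k => (h i - a i * g (∑ j, u k j)) / (Vv f (∑ j, u k j) - g (∑ j, u k j)))
          Filter.atTop
          (nhds ((h i - a i * g (∑ i, s i)) / (Vv f (∑ i, s i) - g (∑ i, s i)))) :=
        (tendsto_const_nhds.sub (tendsto_const_nhds.mul hgt)).div (hVt.sub hgt) hVg.ne'
      constructor
      · -- feasibility of s i in the limit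
        refine ⟨hmem i, ?_, ?_⟩
        · exact le_of_tendsto_of_tendsto (hui i) hupt (hfeasev.mono (fun k hk => hk.1))
        · exact le_of_tendsto_of_tendsto hlot (hui i) (hfeasev.mono (fun k hk => hk.2))
      · -- optimality in the limit
        intro x hx
        obtain ⟨⟨hx0, hxa⟩, hxup, hxlo⟩ := hx
        -- approximating feasible points
        set xk : ℕ → ℝ := fun k => max (min (max 0
            ((h i - a i * g (∑ j, u k j)) / (Vv f (∑ j, u k j) - g (∑ j, u k j)))) (a i))
            (min x (min (a i) (h i / Vv f (∑ j, u k j)))) with hxk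
        have hxkt : Filter.Tendsto xk Filter.atTop (nhds x) := by
          have hlim : Filter.Tendsto xk Filter.atTop (nhds (max (min (max 0
              ((h i - a i * g (∑ j, s j)) / (Vv f (∑ j, s j) - g (∑ j, s j)))) (a i))
              (min x (min (a i) (h i / Vv f (∑ j, s j)))))) :=
            ((tendsto_const_nhds.max hlot).min tendsto_const_nhds).max
              (tendsto_const_nhds.min (tendsto_const_nhds.min hupt))
          have : max (min (max 0
              ((h i - a i * g (∑ j, s j)) / (Vv f (∑ j, s j) - g (∑ j, s j)))) (a i))
              (min x (min (a i) (h i / Vv f (∑ j, s j)))) = x := by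
            rw [min_eq_left (le_min hxa hxup),
              max_eq_right ((min_le_left _ _).trans (max_le hx0 hxlo))]
          rwa [this] at hlim
        have hobjev : ∀ᶠ k in Filter.atTop,
            obj n r h (vwap n f) i (u k) ≤ obj n r h (vwap n f) i (Function.update (u k) i (xk k)) := by
          filter_upwards [hev] with k hk
          apply (((hu k).2 i).1 hk).2
          have hTk0 : (0:ℝ) ≤ ∑ j, u k j := (hTk k).1
          have hTkM : (∑ j, u k j) ≤ M := (hTk k).2.trans S.hMA
          have hVk : 0 < Vv f (∑ j, u k j) := S.hfh.V_pos hTk0 hTkM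
          have hl'u : max 0 ((h i - a i * g (∑ j, u k j)) /
              (Vv f (∑ j, u k j) - g (∑ j, u k j))) ≤ min (a i) (h i / Vv f (∑ j, u k j)) :=
            S.lo'_le_up (hTk k).1 (hTk k).2 hk
          refine ⟨⟨?_, ?_⟩, ?_, ?_⟩
          · exact le_max_of_le_left (le_min (le_max_left _ _) (S.ha i).le)
          · exact max_le (min_le_right _ _)
              ((min_le_right _ _).trans (min_le_left _ _))
          · exact max_le ((min_le_left _ _).trans (hl'u.trans (min_le_right _ _)))
              ((min_le_right _ _).trans (min_le_right _ _))
          · exact le_max_of_le_left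
              (le_min (le_max_right _ _) (S.lo_le_a (hTk k).1 (hTk k).2 hk))
        -- pass to the limit in the objective inequality
        have hLt : Filter.Tendsto (fun k => obj n r h (vwap n f) i (u k)) Filter.atTop
            (nhds (obj n r h (vwap n f) i s)) := by
          simp only [obj_formula]
          apply Filter.Tendsto.sub (Filter.Tendsto.add (hui i) tendsto_const_nhds)
          exact tendsto_const_nhds.mul ((hui i).mul hVt)
        have hRt : Filter.Tendsto
            (fun k => obj n r h (vwap n f) i (Function.update (u k) i (xk k))) Filter.atTop
            (nhds (obj n r h (vwap n f) i (Function.update s i x))) := by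
          simp only [obj_formula, sum_update_eq, Function.update_self]
          have hck : ∀ k, (∑ j ∈ Finset.univ.erase i, u k j) =
              (∑ j, u k j) - u k i := by
            intro k
            have := Finset.sum_erase_add Finset.univ (u k) (Finset.mem_univ i)
            linarith
          have hcs : (∑ j ∈ Finset.univ.erase i, s j) = (∑ j, s j) - s i := by
            have := Finset.sum_erase_add Finset.univ s (Finset.mem_univ i)
            linarith
          have hct : Filter.Tendsto (fun k => (∑ j ∈ Finset.univ.erase i, u k j) + xk k)
              Filter.atTop (nhds ((∑ j ∈ Finset.univ.erase i, s j) + x)) := by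
            apply Filter.Tendsto.add _ hxkt
            apply tendsto_finset_sum
            exact fun j _ => hui j
          have hcmem : ∀ k, (∑ j ∈ Finset.univ.erase i, u k j) + xk k ∈ Icc (0:ℝ) M := by
            intro k
            constructor
            · have h1 : 0 ≤ ∑ j ∈ Finset.univ.erase i, u k j :=
                Finset.sum_nonneg (fun j _ => (hmemk k j).1)
              have h2 : 0 ≤ xk k :=
                le_max_of_le_left (le_min (le_max_left _ _) (S.ha i).le)
              linarith
            · have h1 : (∑ j ∈ Finset.univ.erase i, u k j) ≤ ∑ j ∈ Finset.univ.erase i, a j :=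
                Finset.sum_le_sum (fun j _ => (hmemk k j).2)
              have h2 : xk k ≤ a i :=
                max_le (min_le_right _ _) ((min_le_right _ _).trans (min_le_left _ _))
              have h3 : (∑ j ∈ Finset.univ.erase i, a j) + a i = ∑ j, a j :=
                Finset.sum_erase_add _ _ (Finset.mem_univ i)
              have := S.hMA
              linarith
          have hcmem0 : (∑ j ∈ Finset.univ.erase i, s j) + x ∈ Icc (0:ℝ) M := by
            constructor
            · have h1 : 0 ≤ ∑ j ∈ Finset.univ.erase i, s j :=
                Finset.sum_nonneg (fun j _ => (hmem j).1)
              linarith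
            · have h1 : (∑ j ∈ Finset.univ.erase i, s j) ≤ ∑ j ∈ Finset.univ.erase i, a j :=
                Finset.sum_le_sum (fun j _ => (hmem j).2)
              have h3 : (∑ j ∈ Finset.univ.erase i, a j) + a i = ∑ j, a j :=
                Finset.sum_erase_add _ _ (Finset.mem_univ i)
              have := S.hMA
              linarith
          have hVct : Filter.Tendsto
              (fun k => Vv f ((∑ j ∈ Finset.univ.erase i, u k j) + xk k)) Filter.atTop
              (nhds (Vv f ((∑ j ∈ Finset.univ.erase i, s j) + x))) :=
            hcomp _ S.hfh.V_cont hct hcmem hcmem0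
          apply Filter.Tendsto.sub (Filter.Tendsto.add hxkt tendsto_const_nhds)
          exact tendsto_const_nhds.mul (hxkt.mul hVct)
        exact le_of_tendsto_of_tendsto hLt hRt hobjev

end Setup
end Main5



/-- under VWAP pricing, Assumption 2 and Assumptions 1(3)-1(4) on `g`, the
set of clearing price vectors has a greatest and a least element. -/
theorem vwap_greatest_and_least_clearing_prices
    (n : ℕ) (a h : Fin n → ℝ) (r M : ℝ) (f g : ℝ → ℝ)
    (ha : ∀ i, 0 < a i) (hh : ∀ i, 0 < h i) (hr : 0 ≤ r)
    (hM : ∑ i, a i ≤ M)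
    (hf : Assumption2 M f)
    (hg_mem : ∀ x ∈ Set.Icc (0 : ℝ) M, g x ∈ Set.Ioc (0 : ℝ) 1)
    (hg_cont : ContinuousOn g (Set.Icc 0 M))
    (hg_convex : ConvexOn ℝ (Set.Icc 0 M) g)
    (hg_anti : StrictAntiOn g (Set.Icc 0 M))
    (hg_lt : ∀ s, memD n a s → ∀ i, g (∑ j, s j) < vwap n f i s)
    (hg_total_mono : ∀ i s, memD n a s →
      StrictMonoOn
        (fun x => x * vwap n f i (Function.update s i x)
          + (a i - x) * g (∑ j, Function.update s i x j)) (Set.Icc 0 (a i))) :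
    ∃ (qup : ℝ) (qbup : Fin n → ℝ) (qdn : ℝ) (qbdn : Fin n → ℝ),
      ClearingVWAP n a h r f g qup qbup ∧
      ClearingVWAP n a h r f g qdn qbdn ∧
      ∀ q qb, ClearingVWAP n a h r f g q qb →
        (qdn ≤ q ∧ q ≤ qup) ∧ ∀ i, qbdn i ≤ qb i ∧ qb i ≤ qbup i := by
  rcases Nat.eq_zero_or_pos n with hn | hn
  · -- degenerate case n = 0
    subst hn
    have hsum0 : ∀ s : Fin 0 → ℝ, (∑ i, s i) = 0 := fun s => by simp
    have hclear0 : ClearingVWAP 0 a h r f g (g 0) (fun _ => 1) := by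
      refine ⟨Fin.elim0, fun i => i.elim0, fun i => i.elim0, by rw [hsum0], fun i => i.elim0⟩
    refine ⟨g 0, fun _ => 1, g 0, fun _ => 1, hclear0, hclear0, ?_⟩
    intro q qb hc
    obtain ⟨s, _, _, hq, _⟩ := hc
    rw [hsum0] at hq
    exact ⟨⟨le_of_eq hq.symm, le_of_eq hq⟩, fun i => i.elim0⟩
  · -- main case n ≥ 1
    have hM0 : (0:ℝ) < ∑ i, a i := by
      have : Nonempty (Fin n) := Fin.pos_iff_nonempty.mp hn
      exact Finset.sum_pos (fun i _ => ha i) Finset.univ_nonempty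
    have hMpos : (0:ℝ) < M := lt_of_lt_of_le hM0 hM
    have hFH : FH f M :=
      ⟨hf.smooth.continuousOn, hf.anti, fun x hx => (hf.mem x hx).1,
        fun x hx => (hf.mem x hx).2, hf.f_zero⟩
    have hfdiff : DifferentiableWithinAt ℝ f (Icc 0 M) 0 :=
      (hf.smooth.differentiableOn (by norm_num)) 0 ⟨le_rfl, hMpos.le⟩
    have hglt : ∀ T ∈ Icc (0:ℝ) (∑ i, a i), g T < Vv f T := by
      intro T hT
      set s : Fin n → ℝ := fun i => (T / (∑ j, a j)) * a i with hs
      have hsmem : memD n a s := by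
        intro i
        have h1 : 0 ≤ T / (∑ j, a j) := div_nonneg hT.1 hM0.le
        have h2 : T / (∑ j, a j) ≤ 1 := (div_le_one hM0).2 hT.2
        refine ⟨mul_nonneg h1 (ha i).le, ?_⟩
        calc (T / (∑ j, a j)) * a i ≤ 1 * a i := mul_le_mul_of_nonneg_right h2 (ha i).le
          _ = a i := one_mul _
      have hssum : (∑ i, s i) = T := by
        rw [hs, ← Finset.mul_sum]
        field_simp
      have := hg_lt s hsmem ⟨0, hn⟩
      rw [vwap_eq_Vv, hssum] at this
      exact this
    have S : Setup n a h r M f g :=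
      ⟨ha, hh, hr, hM, hFH, hfdiff, hg_mem, hg_cont, hg_anti, hglt, hn⟩
    have hclosed := S.cset_isClosed
    have hne := S.exists_clearing
    have hcomp : IsCompact (Cset n a h r f g) := by
      apply IsCompact.of_isClosed_subset (isCompact_univ_pi (fun i => isCompact_Icc)) hclosed
      intro s hs
      exact fun i _ => hs.1 i
    have hsumc : ContinuousOn (fun s : Fin n → ℝ => ∑ i, s i) (Cset n a h r f g) :=
      (continuous_finset_sum _ (fun i _ => continuous_apply i)).continuousOn
    obtain ⟨smin, hsmin, hminOn⟩ := hcomp.exists_isMinOn hne hsumc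
    obtain ⟨smax, hsmax, hmaxOn⟩ := hcomp.exists_isMaxOn hne hsumc
    have hsumIcc : ∀ s, s ∈ Cset n a h r f g → (∑ i, s i) ∈ Icc (0:ℝ) M := by
      intro s hs
      constructor
      · exact Finset.sum_nonneg (fun i _ => (hs.1 i).1)
      · exact (Finset.sum_le_sum (fun i _ => (hs.1 i).2)).trans hM
    have hclear : ∀ s, s ∈ Cset n a h r f g →
        ClearingVWAP n a h r f g (g (∑ i, s i)) (fun _ => Vv f (∑ i, s i)) := by
      intro s hs
      exact ⟨s, hs.1, hs.2, rfl, fun i => rfl⟩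
    refine ⟨g (∑ i, smin i), fun _ => Vv f (∑ i, smin i),
      g (∑ i, smax i), fun _ => Vv f (∑ i, smax i),
      hclear smin hsmin, hclear smax hsmax, ?_⟩
    intro q qb hc
    obtain ⟨s, hsD, hsN, hq, hqb⟩ := hc
    have hqb' : qb = fun _ => Vv f (∑ i, s i) := funext (fun i => hqb i)
    have hsC : s ∈ Cset n a h r f g := by
      refine ⟨hsD, ?_⟩
      rw [← hq, ← hqb']
      exact hsN
    have h1 : (∑ i, smin i) ≤ ∑ i, s i := hminOn hsC
    have h2 : (∑ i, s i) ≤ ∑ i, smax i := hmaxOn hsC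
    have hganti := hg_anti.antitoneOn
    have hVanti := S.hfh.V_anti
    have m1 := hsumIcc smin hsmin
    have m2 := hsumIcc s hsC
    have m3 := hsumIcc smax hsmax
    constructor
    · constructor
      · rw [hq]
        exact hganti m2 m3 h2
      · rw [hq]
        exact hganti m1 m2 h1
    · intro i
      rw [hqb i, vwap_eq_Vv]
      exact ⟨hVanti m2 m3 h2, hVanti m1 m2 h1⟩
end
end

section
/- Under the LOB pricing structure with order book density f satisfying Assumption 2, for every bank i: (i) the function f̄_i is non-increasing in every coordinate on D, i.e., if s, ŝ ∈ D with s ≤ ŝ componentwise then f̄_i(s) ≥ f̄_i(ŝ); and (ii) for every fixed s_{-i} ∈ ∏_{j≠i}[0,a_j], the map s_i ∈ [0,a_i] ↦ s_i·f̄_i(s_i, s_{-i}) is strictly increasing and concave. -/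
noncomputable section

/-- Limit order book based price: all banks submit orders at the same rate, so when bank `i`
has sold `u` units the total volume sold is `∑ⱼ min(sⱼ, u)`.  The average price obtained by
bank `i` is `(1/sᵢ) ∫₀^{sᵢ} f(∑ⱼ min(sⱼ,u)) du`, which coincides with the order-statistics
formula of the LOB pricing scheme. -/
def lob (n : ℕ) (f : ℝ → ℝ) : Fin n → (Fin n → ℝ) → ℝ := fun i s =>
  if s i = 0 then 1 else (∫ u in (0:ℝ)..(s i), f (∑ j, min (s j) u)) / s i

open intervalIntegral MeasureTheory

lemma my_intable {h : ℝ → ℝ} {b x y : ℝ} (hc : ContinuousOn h (Set.Icc 0 b))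
    (hx : 0 ≤ x) (hxy : x ≤ y) (hyb : y ≤ b) :
    IntervalIntegrable h volume x y := by
  apply ContinuousOn.intervalIntegrable
  apply hc.mono
  rw [Set.uIcc_of_le hxy]
  exact Set.Icc_subset_Icc hx hyb

lemma my_lb {h : ℝ → ℝ} {b x z : ℝ} (hc : ContinuousOn h (Set.Icc 0 b))
    (hanti : AntitoneOn h (Set.Icc 0 b)) (hx : 0 ≤ x) (hxz : x ≤ z) (hzb : z ≤ b) :
    (z - x) * h z ≤ ∫ u in x..z, h u := by
  have : (∫ _ in x..z, h z) ≤ ∫ u in x..z, h u := by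
    apply intervalIntegral.integral_mono_on hxz (by simp) (my_intable hc hx hxz hzb)
    intro u hu
    exact hanti ⟨le_trans hx hu.1, le_trans hu.2 hzb⟩ ⟨hx.trans hxz, hzb⟩ hu.2
  simpa [smul_eq_mul] using this

lemma my_ub {h : ℝ → ℝ} {b z y : ℝ} (hc : ContinuousOn h (Set.Icc 0 b))
    (hanti : AntitoneOn h (Set.Icc 0 b)) (hz : 0 ≤ z) (hzy : z ≤ y) (hyb : y ≤ b) :
    (∫ u in z..y, h u) ≤ (y - z) * h z := by
  have : (∫ u in z..y, h u) ≤ ∫ _ in z..y, h z := by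
    apply intervalIntegral.integral_mono_on hzy (my_intable hc hz hzy hyb) (by simp)
    intro u hu
    exact hanti ⟨hz, hzy.trans hyb⟩ ⟨hz.trans hu.1, hu.2.trans hyb⟩ hu.1
  simpa [smul_eq_mul] using this

lemma my_avg {h : ℝ → ℝ} {b x y : ℝ} (hc : ContinuousOn h (Set.Icc 0 b))
    (hanti : AntitoneOn h (Set.Icc 0 b)) (hx : 0 < x) (hxy : x ≤ y) (hyb : y ≤ b) :
    (∫ u in (0:ℝ)..y, h u) / y ≤ (∫ u in (0:ℝ)..x, h u) / x := by
  have hy : 0 < y := hx.trans_le hxy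
  have hxb : x ≤ b := hxy.trans hyb
  have hsplit : (∫ u in (0:ℝ)..y, h u) = (∫ u in (0:ℝ)..x, h u) + ∫ u in x..y, h u :=
    (intervalIntegral.integral_add_adjacent_intervals
      (my_intable hc le_rfl hx.le hxb) (my_intable hc hx.le hxy hyb)).symm
  set A := ∫ u in (0:ℝ)..x, h u with hA
  have h1 : x * h x ≤ A := by simpa using my_lb hc hanti le_rfl hx.le hxb
  have h2 : (∫ u in x..y, h u) ≤ (y - x) * h x := my_ub hc hanti hx.le hxy hyb
  rw [div_le_div_iff₀ hy hx, hsplit]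
  have : x * (∫ u in x..y, h u) ≤ (y - x) * A := by
    calc x * (∫ u in x..y, h u) ≤ x * ((y - x) * h x) := by
          apply mul_le_mul_of_nonneg_left h2 hx.le
      _ = (y - x) * (x * h x) := by ring
      _ ≤ (y - x) * A := mul_le_mul_of_nonneg_left h1 (by linarith)
  nlinarith

lemma my_core {h : ℝ → ℝ} {b x y p q : ℝ} (hc : ContinuousOn h (Set.Icc 0 b))
    (hanti : AntitoneOn h (Set.Icc 0 b)) (hx : 0 ≤ x) (hxy : x ≤ y) (hyb : y ≤ b)
    (hp : 0 ≤ p) (hq : 0 ≤ q) (hpq : p + q = 1) :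
    p * (∫ u in (0:ℝ)..x, h u) + q * (∫ u in (0:ℝ)..y, h u)
      ≤ ∫ u in (0:ℝ)..(p*x+q*y), h u := by
  set z := p*x+q*y with hz
  have hxz : x ≤ z := by nlinarith
  have hzy : z ≤ y := by nlinarith
  have hzb : z ≤ b := hzy.trans hyb
  have h0z : 0 ≤ z := hx.trans hxz
  have hs1 : (∫ u in (0:ℝ)..z, h u) = (∫ u in (0:ℝ)..x, h u) + ∫ u in x..z, h u :=
    (intervalIntegral.integral_add_adjacent_intervals
      (my_intable hc le_rfl hx (hxz.trans hzb)) (my_intable hc hx hxz hzb)).symm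
  have hs2 : (∫ u in (0:ℝ)..y, h u) = (∫ u in (0:ℝ)..z, h u) + ∫ u in z..y, h u :=
    (intervalIntegral.integral_add_adjacent_intervals
      (my_intable hc le_rfl h0z hzb) (my_intable hc h0z hzy hyb)).symm
  have h1 : (z - x) * h z ≤ ∫ u in x..z, h u := my_lb hc hanti hx hxz hzb
  have h2 : (∫ u in z..y, h u) ≤ (y - z) * h z := my_ub hc hanti h0z hzy hyb
  have e1 : z - x = q * (y - x) := by rw [hz]; nlinarith [hpq]
  have e2 : y - z = p * (y - x) := by rw [hz]; nlinarith [hpq]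
  have key : q * (∫ u in z..y, h u) ≤ p * (∫ u in x..z, h u) := by
    calc q * (∫ u in z..y, h u) ≤ q * ((y - z) * h z) := mul_le_mul_of_nonneg_left h2 hq
      _ = p * ((z - x) * h z) := by rw [e1, e2]; ring
      _ ≤ p * (∫ u in x..z, h u) := mul_le_mul_of_nonneg_left h1 hp
  have hp1 : p = 1 - q := by linarith
  rw [hs2, hs1]
  rw [hp1] at key ⊢
  nlinarith [key]

/-- under LOB pricing with Assumption 2, each `f̄ᵢ` is non-increasing in
every coordinate on `D`, and for fixed `s₋ᵢ` the cash raised `sᵢ ↦ sᵢ·f̄ᵢ(sᵢ, s₋ᵢ)` is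
strictly increasing and concave on `[0, aᵢ]`. -/
theorem lob_price_monotone_and_cash_concave
    (n : ℕ) (a : Fin n → ℝ) (M : ℝ) (f : ℝ → ℝ)
    (ha : ∀ i, 0 < a i) (hM : ∑ i, a i ≤ M)
    (hf : Assumption2 M f) :
    ∀ i : Fin n,
      (∀ s t : Fin n → ℝ, memD n a s → memD n a t → (∀ j, s j ≤ t j) →
        lob n f i t ≤ lob n f i s) ∧
      (∀ s : Fin n → ℝ, memD n a s →
        StrictMonoOn (fun x => x * lob n f i (Function.update s i x)) (Set.Icc 0 (a i)) ∧
        ConcaveOn ℝ (Set.Icc 0 (a i)) (fun x => x * lob n f i (Function.update s i x))) := by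
  intro i
  set T : (Fin n → ℝ) → ℝ → ℝ := fun s u => ∑ j ∈ Finset.univ.erase i, min (s j) u with hT
  set h : (Fin n → ℝ) → ℝ → ℝ := fun s u => f (u + T s u) with hh
  -- T basic facts
  have hTmono : ∀ s : Fin n → ℝ, Monotone (fun u => T s u) := by
    intro s u v huv
    exact Finset.sum_le_sum fun j _ => min_le_min le_rfl huv
  have hTle : ∀ s t : Fin n → ℝ, (∀ j, s j ≤ t j) → ∀ u, T s u ≤ T t u := by
    intro s t hst u
    exact Finset.sum_le_sum fun j _ => min_le_min (hst j) le_rfl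
  have hTcont : ∀ s : Fin n → ℝ, Continuous (fun u => T s u) := by
    intro s
    exact continuous_finset_sum _ fun j _ => continuous_const.min continuous_id
  have hφmem : ∀ s : Fin n → ℝ, memD n a s → ∀ u ∈ Set.Icc 0 (a i),
      u + T s u ∈ Set.Icc (0:ℝ) M := by
    intro s hs u hu
    constructor
    · have : 0 ≤ T s u := Finset.sum_nonneg fun j _ => le_min (hs j).1 hu.1
      linarith [hu.1]
    · have h1 : T s u ≤ ∑ j ∈ Finset.univ.erase i, a j :=
        Finset.sum_le_sum fun j _ => (min_le_left _ _).trans (hs j).2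
      have h2 : (∑ j ∈ Finset.univ.erase i, a j) + a i = ∑ j, a j :=
        Finset.sum_erase_add _ _ (Finset.mem_univ i)
      linarith [hu.2]
  have hcont : ∀ s : Fin n → ℝ, memD n a s → ContinuousOn (h s) (Set.Icc 0 (a i)) := by
    intro s hs
    exact hf.smooth.continuousOn.comp
      (continuous_id.add (hTcont s)).continuousOn (fun u hu => hφmem s hs u hu)
  have hanti : ∀ s : Fin n → ℝ, memD n a s → AntitoneOn (h s) (Set.Icc 0 (a i)) := by
    intro s hs u hu v hv huv
    exact hf.anti.antitoneOn (hφmem s hs u hu) (hφmem s hs v hv)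
      (add_le_add huv (hTmono s huv))
  have hmem : ∀ s : Fin n → ℝ, memD n a s → ∀ u ∈ Set.Icc 0 (a i),
      h s u ∈ Set.Ioc (0:ℝ) 1 := fun s hs u hu => hf.mem _ (hφmem s hs u hu)
  -- integrand rewriting
  have hsum : ∀ (s : Fin n → ℝ), ∀ u ∈ Set.Icc (0:ℝ) (s i),
      ∑ j, min (s j) u = u + T s u := by
    intro s u hu
    rw [← Finset.sum_erase_add _ _ (Finset.mem_univ i), min_eq_right hu.2, add_comm]
  have hlob : ∀ s : Fin n → ℝ, memD n a s → s i ≠ 0 →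
      lob n f i s = (∫ u in (0:ℝ)..(s i), h s u) / s i := by
    intro s hs hsi
    rw [lob, if_neg hsi]
    congr 1
    apply intervalIntegral.integral_congr
    intro u hu
    rw [Set.uIcc_of_le (hs i).1] at hu
    exact congrArg f (hsum s u hu)
  -- facts about updates
  have hupdD : ∀ (s : Fin n → ℝ), memD n a s → ∀ x ∈ Set.Icc 0 (a i),
      memD n a (Function.update s i x) := by
    intro s hs x hx j
    rcases eq_or_ne j i with rfl | hj
    · simpa using hx
    · simpa [Function.update_of_ne hj] using hs j
  have hTupd : ∀ (s : Fin n → ℝ) (x : ℝ), T (Function.update s i x) = T s := by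
    intro s x
    funext u
    exact Finset.sum_congr rfl fun j hj => by
      rw [Function.update_of_ne (Finset.ne_of_mem_erase hj)]
  have hcash : ∀ (s : Fin n → ℝ), memD n a s → ∀ x ∈ Set.Icc 0 (a i),
      x * lob n f i (Function.update s i x) = ∫ u in (0:ℝ)..x, h s u := by
    intro s hs x hx
    rcases eq_or_ne x 0 with rfl | hx0
    · simp [lob]
    · rw [hlob _ (hupdD s hs x hx) (by simpa using hx0)]
      have : h (Function.update s i x) = h s := by
        rw [hh]; simp only [hTupd]
      rw [Function.update_self, this, mul_div_cancel₀ _ hx0]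
  refine ⟨?_, ?_⟩
  · -- part (i): monotone non-increasing in each coordinate
    intro s t hs ht hst
    rcases eq_or_ne (t i) 0 with ht0 | ht0
    · have hs0 : s i = 0 := le_antisymm (ht0 ▸ hst i) (hs i).1
      rw [lob, lob, if_pos hs0, if_pos ht0]
    · have hty : 0 < t i := lt_of_le_of_ne (ht i).1 (Ne.symm ht0)
      rw [hlob t ht ht0]
      have hint_t : IntervalIntegrable (h t) volume 0 (t i) :=
        my_intable (hcont t ht) le_rfl (ht i).1 (ht i).2
      rcases eq_or_ne (s i) 0 with hs0 | hs0
      · rw [lob, if_pos hs0]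
        rw [div_le_one hty]
        calc (∫ u in (0:ℝ)..(t i), h t u) ≤ ∫ _ in (0:ℝ)..(t i), (1:ℝ) := by
              apply intervalIntegral.integral_mono_on (ht i).1 hint_t (by simp)
              intro u hu
              exact (hmem t ht u ⟨hu.1, hu.2.trans (ht i).2⟩).2
          _ = t i := by simp
      · have hsx : 0 < s i := lt_of_le_of_ne (hs i).1 (Ne.symm hs0)
        rw [hlob s hs hs0]
        have hxy : s i ≤ t i := hst i
        have hint_s : IntervalIntegrable (h s) volume 0 (t i) :=
          my_intable (hcont s hs) le_rfl (ht i).1 (ht i).2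
        have step_a : (∫ u in (0:ℝ)..(t i), h t u) ≤ ∫ u in (0:ℝ)..(t i), h s u := by
          apply intervalIntegral.integral_mono_on (ht i).1 hint_t hint_s
          intro u hu
          have hu' : u ∈ Set.Icc (0:ℝ) (a i) := ⟨hu.1, hu.2.trans (ht i).2⟩
          exact hf.anti.antitoneOn (hφmem s hs u hu') (hφmem t ht u hu')
            (add_le_add le_rfl (hTle s t hst u))
        have step_b : (∫ u in (0:ℝ)..(t i), h s u) / t i
            ≤ (∫ u in (0:ℝ)..(s i), h s u) / s i :=
          my_avg (hcont s hs) (hanti s hs) hsx hxy (ht i).2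
        calc (∫ u in (0:ℝ)..(t i), h t u) / t i
            ≤ (∫ u in (0:ℝ)..(t i), h s u) / t i := by
              exact div_le_div_of_nonneg_right step_a hty.le
          _ ≤ _ := step_b
  · -- part (ii)
    intro s hs
    constructor
    · intro x hx y hy hxy
      simp only
      rw [hcash s hs x hx, hcash s hs y hy]
      have hsplit : (∫ u in (0:ℝ)..y, h s u) = (∫ u in (0:ℝ)..x, h s u) + ∫ u in x..y, h s u :=
        (intervalIntegral.integral_add_adjacent_intervals
          (my_intable (hcont s hs) le_rfl hx.1 hx.2)
          (my_intable (hcont s hs) hx.1 hxy.le hy.2)).symm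
      have hpos : 0 < ∫ u in x..y, h s u := by
        apply intervalIntegral.intervalIntegral_pos_of_pos_on
          (my_intable (hcont s hs) hx.1 hxy.le hy.2)
        · intro u hu
          exact (hmem s hs u ⟨hx.1.trans hu.1.le, hu.2.le.trans hy.2⟩).1
        · exact hxy
      linarith
    · refine ⟨convex_Icc _ _, ?_⟩
      intro x hx y hy p q hp hq hpq
      have hz : p • x + q • y ∈ Set.Icc 0 (a i) := (convex_Icc _ _) hx hy hp hq hpq
      simp only [smul_eq_mul] at hz ⊢
      rw [hcash s hs x hx, hcash s hs y hy, hcash s hs _ hz]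
      rcases le_total x y with hxy | hyx
      · exact my_core (hcont s hs) (hanti s hs) hx.1 hxy hy.2 hp hq hpq
      · have := my_core (hcont s hs) (hanti s hs) hy.1 hyx hx.2 hq hp (by linarith)
        have heq : q * y + p * x = p * x + q * y := by ring
        rw [heq] at this
        linarith
end
end
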